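/- arXiv:1406.5791 — 5 statements merged into one kernel-verified Lean document; each statement's English description precedes it below -/
import Mathlib

section
/- For a d-regular graph G with normalized Laplacian L, and any 0 < δ ≤ 1/2, the small-set expansion satisfies φ_δ(G) ≤ sqrt((2 − λ_δ)·λ_δ), where λ_δ is the minimum Rayleigh quotient of L over δn-sparse vectors. (Hard direction of sparse Cheeger's inequality with improved constant.) -/
open Matrix Finset

lemma tele_aux (l : List ℝ) (hl : l.Pairwise (· < ·)) {a : ℝ} (ha : a ∈ l) :
    ∑ m ∈ Finset.range (l.length - 1),
      (l.getD (m+1) 0 - l.getD m 0) * (if l.getD m 0 < a then 1 else 0)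
    = a - l.getD 0 0 := by
  obtain ⟨⟨M, hM⟩, rfl⟩ := List.mem_iff_get.mp ha
  have hsm := hl.sortedLT.strictMono_get
  have key : ∀ m ∈ Finset.range (l.length - 1),
      (l.getD (m+1) 0 - l.getD m 0) * (if l.getD m 0 < l.get ⟨M, hM⟩ then 1 else 0)
      = if m < M then (l.getD (m+1) 0 - l.getD m 0) else 0 := by
    intro m hm
    have hm' : m < l.length := by
      have := Finset.mem_range.mp hm; omega
    rw [List.getD_eq_getElem _ _ hm']
    by_cases h : m < M
    · rw [if_pos, if_pos h, mul_one]
      exact hsm (show (⟨m, hm'⟩ : Fin _) < ⟨M, hM⟩ from h)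
    · rw [if_neg, if_neg h, mul_zero]
      exact not_lt.2 (hsm.monotone (show (⟨M, hM⟩ : Fin _) ≤ ⟨m, hm'⟩ from not_lt.1 h))
  rw [Finset.sum_congr rfl key, Finset.sum_ite, Finset.sum_const_zero, add_zero]
  have hfilter : (Finset.range (l.length - 1)).filter (fun m => m < M) = Finset.range M := by
    ext m; simp only [Finset.mem_filter, Finset.mem_range]; omega
  rw [hfilter, Finset.sum_range_sub (fun m => l.getD m 0) M,
    List.getD_eq_getElem _ _ hM]
  rfl

/-- per-pair: gap-weighted sum of `[v m < a]·[¬ v m < b]` is `max (a-b) 0`. -/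
lemma pair_aux (l : List ℝ) (hl : l.Pairwise (· < ·)) {a b : ℝ} (ha : a ∈ l) (hb : b ∈ l) :
    ∑ m ∈ Finset.range (l.length - 1),
      (l.getD (m+1) 0 - l.getD m 0) *
        ((if l.getD m 0 < a then 1 else 0) * (if l.getD m 0 < b then 0 else 1))
    = max (a - b) 0 := by
  rcases le_or_gt a b with hab | hab
  · rw [max_eq_right (by linarith)]
    apply Finset.sum_eq_zero
    intro m _
    split_ifs with h1 h2
    · ring
    · linarith
    · ring
    · ring
  · rw [max_eq_left (by linarith)]
    have key : ∀ m ∈ Finset.range (l.length - 1),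
        (l.getD (m+1) 0 - l.getD m 0) *
          ((if l.getD m 0 < a then 1 else 0) * (if l.getD m 0 < b then 0 else 1))
        = (l.getD (m+1) 0 - l.getD m 0) * (if l.getD m 0 < a then 1 else 0)
          - (l.getD (m+1) 0 - l.getD m 0) * (if l.getD m 0 < b then 1 else 0) := by
      intro m _
      split_ifs with h1 h2
      · ring
      · ring
      · linarith
      · ring
    rw [Finset.sum_congr rfl key, Finset.sum_sub_distrib, tele_aux l hl ha, tele_aux l hl hb]
    ring


set_option maxHeartbeats 2000000 in
/-- Hard direction of the sparse Cheeger inequality with improved constant: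
φ_δ(G) ≤ sqrt((2 − λ_δ)·λ_δ).  For every nonzero δn-sparse vector x with
Rayleigh quotient λ, there is a nonempty set S with |S| ≤ δn whose edge
expansion is at most sqrt((2 − λ)·λ). -/
theorem sparse_cheeger_hard_direction (n d : ℕ) (hd : 0 < d)
    (A : Matrix (Fin n) (Fin n) ℝ) (hsymm : A.IsSymm)
    (h01 : ∀ i j, A i j = 0 ∨ A i j = 1) (hdiag : ∀ i, A i i = 0)
    (hreg : ∀ i, ∑ j, A i j = d)
    (δ : ℝ) (hδ0 : 0 < δ) (hδ : δ ≤ 1 / 2)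
    (x : Fin n → ℝ) (hx : x ≠ 0)
    (hsparse : ((Function.support x).ncard : ℝ) ≤ δ * n)
    (lam : ℝ)
    (hlam : lam = (x ⬝ᵥ (1 - (d : ℝ)⁻¹ • A).mulVec x) / (x ⬝ᵥ x)) :
    ∃ S : Finset (Fin n), S.Nonempty ∧ ((S.card : ℝ) ≤ δ * n) ∧
      (∑ i ∈ S, ∑ j ∈ Sᶜ, A i j) / (d * S.card)
        ≤ Real.sqrt ((2 - lam) * lam) := by
  classical
  set f : Fin n → ℝ := fun i => x i ^ 2 with hf
  set c : ℝ := ∑ i, f i with hc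
  have hxne : ∃ i, x i ≠ 0 := by
    by_contra h; push_neg at h; exact hx (funext h)
  have hcpos : 0 < c := by
    obtain ⟨i, hi⟩ := hxne
    have h1 : 0 < f i := by simp only [hf]; positivity
    exact lt_of_lt_of_le h1
      (Finset.single_le_sum (fun j _ => by simp only [hf]; positivity) (mem_univ i))
  have hdR : (0:ℝ) < d := by exact_mod_cast hd
  have hAnn : ∀ i j, 0 ≤ A i j := by
    intro i j; rcases h01 i j with h | h <;> rw [h] <;> norm_num
  have hcol : ∀ j, ∑ i, A i j = d := by
    intro j
    calc ∑ i, A i j = ∑ i, A j i := Finset.sum_congr rfl fun i _ => hsymm.apply j i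
    _ = d := hreg j
  set xAx : ℝ := ∑ i, ∑ j, A i j * x i * x j with hxAx
  have hdot : x ⬝ᵥ A.mulVec x = xAx := by
    simp only [dotProduct, Matrix.mulVec, hxAx, Finset.mul_sum]
    exact Finset.sum_congr rfl fun i _ => Finset.sum_congr rfl fun j _ => by ring
  have hxxc : x ⬝ᵥ x = c := by
    simp only [dotProduct, hc, hf, sq]
  have hlamc : lam * c = c - (d:ℝ)⁻¹ * xAx := by
    rw [hlam, Matrix.sub_mulVec, Matrix.one_mulVec, Matrix.smul_mulVec,
      dotProduct_sub, dotProduct_smul, hdot, hxxc, smul_eq_mul]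
    field_simp
  have hxAxval : xAx = (d:ℝ) * ((1:ℝ) - lam) * c := by
    have hd0 : (d:ℝ) ≠ 0 := hdR.ne'
    field_simp at hlamc
    linarith
  -- the three expansion sums
  have e1 : ∑ i, ∑ j, A i j * x i ^ 2 = d * c := by
    have h1 : ∀ i, ∑ j, A i j * x i ^ 2 = (d:ℝ) * x i ^ 2 := by
      intro i; rw [← Finset.sum_mul, hreg i]
    rw [Finset.sum_congr rfl fun i _ => h1 i, ← Finset.mul_sum]
  have e2 : ∑ i, ∑ j, A i j * x j ^ 2 = d * c := by
    rw [Finset.sum_comm]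
    have h1 : ∀ j, ∑ i, A i j * x j ^ 2 = (d:ℝ) * x j ^ 2 := by
      intro j; rw [← Finset.sum_mul, hcol j]
    rw [Finset.sum_congr rfl fun j _ => h1 j, ← Finset.mul_sum]
  set Q : ℝ := ∑ i, ∑ j, A i j * (x i - x j)^2 with hQdef
  set P : ℝ := ∑ i, ∑ j, A i j * (x i + x j)^2 with hPdef
  have hQ : Q = 2 * ((d:ℝ) * lam * c) := by
    have expand : ∀ i : Fin n, ∑ j, A i j * (x i - x j)^2
        = ∑ j, (A i j * x i ^ 2 - 2 * (A i j * x i * x j) + A i j * x j ^ 2) :=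
      fun i => Finset.sum_congr rfl fun j _ => by ring
    rw [hQdef, Finset.sum_congr rfl fun i _ => expand i]
    simp only [Finset.sum_add_distrib, Finset.sum_sub_distrib, ← Finset.mul_sum]
    rw [e1, e2]
    rw [← hxAx, hxAxval]; ring
  have hP : P = 2 * ((d:ℝ) * (2 - lam) * c) := by
    have expand : ∀ i : Fin n, ∑ j, A i j * (x i + x j)^2
        = ∑ j, (A i j * x i ^ 2 + 2 * (A i j * x i * x j) + A i j * x j ^ 2) :=
      fun i => Finset.sum_congr rfl fun j _ => by ring
    rw [hPdef, Finset.sum_congr rfl fun i _ => expand i]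
    simp only [Finset.sum_add_distrib, ← Finset.mul_sum]
    rw [e1, e2]
    rw [← hxAx, hxAxval]; ring
  set B : ℝ := ∑ i, ∑ j, A i j * |f i - f j| with hBdef
  have hBnn : 0 ≤ B := by
    apply Finset.sum_nonneg; intro i _; apply Finset.sum_nonneg; intro j _
    exact mul_nonneg (hAnn i j) (abs_nonneg _)
  have hCS : B ^ 2 ≤ Q * P := by
    have hAsq : ∀ i j, A i j * A i j = A i j := by
      intro i j; rcases h01 i j with h | h <;> rw [h] <;> ring
    have hB' : B = ∑ p : Fin n × Fin n,
        (A p.1 p.2 * |x p.1 - x p.2|) * (A p.1 p.2 * |x p.1 + x p.2|) := by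
      rw [hBdef, Fintype.sum_prod_type]
      refine Finset.sum_congr rfl fun i _ => Finset.sum_congr rfl fun j _ => ?_
      have habs : |f i - f j| = |x i - x j| * |x i + x j| := by
        rw [← abs_mul]; congr 1; simp only [hf]; ring
      rw [habs, show (A i j * |x i - x j|) * (A i j * |x i + x j|)
        = (A i j * A i j) * (|x i - x j| * |x i + x j|) by ring, hAsq]
    have hQ' : Q = ∑ p : Fin n × Fin n, (A p.1 p.2 * |x p.1 - x p.2|) ^ 2 := by
      rw [hQdef, Fintype.sum_prod_type]
      refine Finset.sum_congr rfl fun i _ => Finset.sum_congr rfl fun j _ => ?_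
      rw [mul_pow, sq_abs, pow_two (A i j), hAsq]
    have hP' : P = ∑ p : Fin n × Fin n, (A p.1 p.2 * |x p.1 + x p.2|) ^ 2 := by
      rw [hPdef, Fintype.sum_prod_type]
      refine Finset.sum_congr rfl fun i _ => Finset.sum_congr rfl fun j _ => ?_
      rw [mul_pow, sq_abs, pow_two (A i j), hAsq]
    rw [hB', hQ', hP']
    exact Finset.sum_mul_sq_le_sq_mul_sq _ _ _
  have hBle : B ≤ 2 * ((d:ℝ) * c * Real.sqrt ((2 - lam) * lam)) := by
    have hQP : Q * P = (2 * ((d:ℝ) * c))^2 * ((2 - lam) * lam) := by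
      rw [hQ, hP]; ring
    calc B = Real.sqrt (B ^ 2) := (Real.sqrt_sq hBnn).symm
    _ ≤ Real.sqrt (Q * P) := Real.sqrt_le_sqrt hCS
    _ = Real.sqrt ((2 * ((d:ℝ) * c))^2) * Real.sqrt ((2 - lam) * lam) := by
        rw [hQP, Real.sqrt_mul (sq_nonneg _)]
    _ = 2 * ((d:ℝ) * c * Real.sqrt ((2 - lam) * lam)) := by
        rw [Real.sqrt_sq (by positivity)]; ring
  -- value list
  set Fs : Finset ℝ := insert 0 (Finset.image f Finset.univ) with hFs
  set l : List ℝ := Fs.sort (· ≤ ·) with hls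
  have hl : l.Pairwise (· < ·) := Fs.sortedLT_sort.pairwise
  set k := l.length with hk
  have hmemF : ∀ a, a ∈ Fs → a ∈ l := fun a ha => (Finset.mem_sort _).2 ha
  have hmemF' : ∀ a, a ∈ l → a ∈ Fs := fun a ha => (Finset.mem_sort _).1 ha
  have h0l : (0:ℝ) ∈ l := hmemF 0 (Finset.mem_insert_self _ _)
  have hfl : ∀ i, f i ∈ l :=
    fun i => hmemF _ (Finset.mem_insert_of_mem (Finset.mem_image_of_mem f (mem_univ i)))
  have hknz : 0 < k := List.length_pos_iff.2 (List.ne_nil_of_mem h0l)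
  have hFnn : ∀ a ∈ l, 0 ≤ a := by
    intro a ha
    rcases Finset.mem_insert.1 (hmemF' a ha) with h | h
    · exact h.ge
    · obtain ⟨i, _, rfl⟩ := Finset.mem_image.1 h
      simp only [hf]; positivity
  set v : ℕ → ℝ := fun m => l.getD m 0 with hv
  have hget : ∀ m (hm : m < k), v m = l.get ⟨m, hm⟩ := by
    intro m hm
    simp only [hv]
    rw [List.getD_eq_getElem _ _ hm, List.get_eq_getElem]
  have hvmem : ∀ m, m < k → v m ∈ l := by
    intro m hm; rw [hget m hm]; exact List.get_mem _ _
  have hvmono : ∀ a b, a ≤ b → b < k → v a ≤ v b := by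
    intro a b hab hb
    rw [hget a (lt_of_le_of_lt hab hb), hget b hb]
    exact hl.sortedLT.strictMono_get.monotone hab
  have hvnn : ∀ m, m < k → 0 ≤ v m := fun m hm => hFnn _ (hvmem m hm)
  have hv0 : v 0 = 0 := by
    obtain ⟨⟨M, hM⟩, hM0⟩ := List.mem_iff_get.mp h0l
    refine le_antisymm ?_ (hvnn 0 hknz)
    have h1 : v 0 ≤ v M := hvmono 0 M (Nat.zero_le M) hM
    rwa [hget M hM, hM0] at h1
  set gap : ℕ → ℝ := fun m => v (m+1) - v m with hgap
  set S : ℕ → Finset (Fin n) := fun m => Finset.univ.filter (fun i => v m < f i) with hS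
  have tele : ∀ a ∈ l, ∑ m ∈ Finset.range (k-1), gap m * (if v m < a then 1 else 0) = a := by
    intro a ha
    have h := tele_aux l hl ha
    simp only [hgap, hv]
    have hv00 : l.getD 0 0 = 0 := by simpa only [hv] using hv0
    rw [hv00, sub_zero] at h
    exact h
  have pair : ∀ a b, a ∈ l → b ∈ l →
      ∑ m ∈ Finset.range (k-1),
        gap m * ((if v m < a then 1 else 0) * (if v m < b then 0 else 1)) = max (a - b) 0 := by
    intro a b ha hb
    have h := pair_aux l hl ha hb
    simp only [hgap, hv]
    exact h
  -- Identity 1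
  have hI1 : ∑ m ∈ Finset.range (k-1), gap m * ((S m).card : ℝ) = c := by
    have hcard : ∀ m, ((S m).card : ℝ) = ∑ i, if v m < f i then (1:ℝ) else 0 := by
      intro m
      simp only [hS, Finset.card_filter]
      push_cast
      exact Finset.sum_congr rfl fun i _ => by split_ifs <;> simp
    calc ∑ m ∈ Finset.range (k-1), gap m * ((S m).card : ℝ)
        = ∑ m ∈ Finset.range (k-1), ∑ i, gap m * (if v m < f i then (1:ℝ) else 0) := by
          refine Finset.sum_congr rfl fun m _ => ?_
          rw [hcard m, Finset.mul_sum]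
      _ = ∑ i, ∑ m ∈ Finset.range (k-1), gap m * (if v m < f i then (1:ℝ) else 0) :=
          Finset.sum_comm
      _ = ∑ i, f i := Finset.sum_congr rfl fun i _ => tele (f i) (hfl i)
  -- Identity 2
  set T : ℝ := ∑ i, ∑ j, A i j * max (f i - f j) 0 with hT
  have hedge : ∀ m, (∑ i ∈ S m, ∑ j ∈ (S m)ᶜ, A i j)
      = ∑ i, ∑ j, A i j * ((if v m < f i then (1:ℝ) else 0) * (if v m < f j then 0 else 1)) := by
    intro m
    have hcompl : (S m)ᶜ = Finset.univ.filter (fun j => ¬ v m < f j) := by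
      ext j; simp [hS]
    rw [hcompl]
    simp only [hS]
    rw [Finset.sum_filter]
    refine Finset.sum_congr rfl fun i _ => ?_
    by_cases h1 : v m < f i
    · rw [if_pos h1, Finset.sum_filter]
      refine Finset.sum_congr rfl fun j _ => ?_
      by_cases h2 : v m < f j
      · simp [h1, h2]
      · simp [h1, h2]
    · rw [if_neg h1]
      symm
      apply Finset.sum_eq_zero
      intro j _
      simp [h1]
  have hI2 : ∑ m ∈ Finset.range (k-1), gap m * (∑ i ∈ S m, ∑ j ∈ (S m)ᶜ, A i j) = T := by
    calc ∑ m ∈ Finset.range (k-1), gap m * (∑ i ∈ S m, ∑ j ∈ (S m)ᶜ, A i j)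
        = ∑ m ∈ Finset.range (k-1), ∑ i, ∑ j,
            A i j * (gap m * ((if v m < f i then (1:ℝ) else 0) * (if v m < f j then 0 else 1))) := by
          refine Finset.sum_congr rfl fun m _ => ?_
          rw [hedge m, Finset.mul_sum]
          refine Finset.sum_congr rfl fun i _ => ?_
          rw [Finset.mul_sum]
          exact Finset.sum_congr rfl fun j _ => by ring
      _ = ∑ i, ∑ j, ∑ m ∈ Finset.range (k-1),
            A i j * (gap m * ((if v m < f i then (1:ℝ) else 0) * (if v m < f j then 0 else 1))) := by
          rw [Finset.sum_comm]
          exact Finset.sum_congr rfl fun i _ => Finset.sum_comm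
      _ = T := by
          rw [hT]
          refine Finset.sum_congr rfl fun i _ => Finset.sum_congr rfl fun j _ => ?_
          rw [← Finset.mul_sum, pair (f i) (f j) (hfl i) (hfl j)]
  -- T + T = B
  have hmaxabs : ∀ p q : ℝ, max (p - q) 0 + max (q - p) 0 = |p - q| := by
    intro p q
    rcases le_total p q with h | h
    · rw [max_eq_right (by linarith), max_eq_left (by linarith), abs_of_nonpos (by linarith)]
      ring
    · rw [max_eq_left (by linarith), max_eq_right (by linarith), abs_of_nonneg (by linarith)]
      ring
  have hTB : T + T = B := by
    have hswap : T = ∑ i, ∑ j, A i j * max (f j - f i) 0 := by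
      calc T = ∑ j, ∑ i, A i j * max (f i - f j) 0 := Finset.sum_comm
      _ = ∑ i, ∑ j, A i j * max (f j - f i) 0 :=
          Finset.sum_congr rfl fun i _ => Finset.sum_congr rfl fun j _ => by
            rw [hsymm.apply i j]
    nth_rewrite 2 [hswap]
    rw [hT, hBdef, ← Finset.sum_add_distrib]
    refine Finset.sum_congr rfl fun i _ => ?_
    rw [← Finset.sum_add_distrib]
    refine Finset.sum_congr rfl fun j _ => ?_
    rw [← mul_add, hmaxabs]
  have hTle : T ≤ (d:ℝ) * c * Real.sqrt ((2 - lam) * lam) := by linarith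
  -- contradiction setup
  by_contra hcon
  push_neg at hcon
  have hsupp : ∀ m, m < k → ((S m).card : ℝ) ≤ δ * n := by
    intro m hm
    have hsub : S m ⊆ Finset.univ.filter (fun i => x i ≠ 0) := by
      intro i hi
      simp only [hS, Finset.mem_filter] at hi ⊢
      refine ⟨mem_univ i, fun h0 => ?_⟩
      have h1 := hvnn m hm
      have h2 : f i = 0 := by simp only [hf, h0]; ring
      have h3 := hi.2
      rw [h2] at h3
      linarith
    have hcards : ((Finset.univ.filter (fun i => x i ≠ 0)).card : ℝ) ≤ δ * n := by
      have hss : Function.support x = ↑(Finset.univ.filter (fun i => x i ≠ 0)) := by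
        ext i; simp [Function.mem_support]
      rw [hss, Set.ncard_coe_finset] at hsparse
      exact hsparse
    exact le_trans (by exact_mod_cast Finset.card_le_card hsub) hcards
  have hkey : ∀ m ∈ Finset.range (k-1), 0 < gap m →
      gap m * ((d:ℝ) * Real.sqrt ((2 - lam) * lam) * (S m).card)
        < gap m * (∑ i ∈ S m, ∑ j ∈ (S m)ᶜ, A i j) := by
    intro m hm hg
    have hmk : m < k := by have := Finset.mem_range.1 hm; omega
    have hm1k : m + 1 < k := by have := Finset.mem_range.1 hm; omega
    have hne : (S m).Nonempty := by
      have hv1l : v (m+1) ∈ l := hvmem _ hm1k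
      rcases Finset.mem_insert.1 (hmemF' _ hv1l) with h | h
      · exfalso
        have h1 := hvnn m hmk
        have h2 : v m < v (m+1) := by
          have := hg; simp only [hgap] at this; linarith
        rw [h] at h2; linarith
      · obtain ⟨i, _, hfi⟩ := Finset.mem_image.1 h
        refine ⟨i, ?_⟩
        simp only [hS, Finset.mem_filter]
        refine ⟨mem_univ i, ?_⟩
        rw [hfi]
        have := hg; simp only [hgap] at this; linarith
    have hcard0 : (0:ℝ) < (S m).card := by
      exact_mod_cast Finset.card_pos.2 hne
    have hdc : (0:ℝ) < (d:ℝ) * (S m).card := by positivity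
    have hthis := hcon (S m) hne (hsupp m hmk)
    have h2 : Real.sqrt ((2 - lam) * lam) * ((d:ℝ) * (S m).card)
        < ∑ i ∈ S m, ∑ j ∈ (S m)ᶜ, A i j := (lt_div_iff₀ hdc).1 hthis
    have h3 : (d:ℝ) * Real.sqrt ((2 - lam) * lam) * (S m).card
        < ∑ i ∈ S m, ∑ j ∈ (S m)ᶜ, A i j := by linarith [h2]
    exact (mul_lt_mul_iff_right₀ hg).2 h3
  have hgapnn : ∀ m ∈ Finset.range (k-1), 0 ≤ gap m := by
    intro m hm
    have h1 := Finset.mem_range.1 hm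
    have := hvmono m (m+1) (by omega) (by omega)
    simp only [hgap]
    linarith
  have hex : ∃ m ∈ Finset.range (k-1), 0 < gap m * ((S m).card : ℝ) := by
    by_contra h
    push_neg at h
    have hsum : ∑ m ∈ Finset.range (k-1), gap m * ((S m).card : ℝ) ≤ 0 :=
      Finset.sum_nonpos h
    rw [hI1] at hsum
    linarith
  obtain ⟨m₀, hm₀, hm₀pos⟩ := hex
  have hg₀ : 0 < gap m₀ := by
    rcases lt_or_ge 0 (gap m₀) with h | h
    · exact h
    · exfalso
      have hcn : (0:ℝ) ≤ ((S m₀).card : ℝ) := Nat.cast_nonneg _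
      nlinarith
  have hlt : ∑ m ∈ Finset.range (k-1), gap m * ((d:ℝ) * Real.sqrt ((2 - lam) * lam) * (S m).card)
      < ∑ m ∈ Finset.range (k-1), gap m * (∑ i ∈ S m, ∑ j ∈ (S m)ᶜ, A i j) := by
    apply Finset.sum_lt_sum
    · intro m hm
      rcases eq_or_lt_of_le (hgapnn m hm) with h | h
      · rw [← h, zero_mul, zero_mul]
      · exact (hkey m hm h).le
    · exact ⟨m₀, hm₀, hkey m₀ hm₀ hg₀⟩
  have hLHS : ∑ m ∈ Finset.range (k-1), gap m * ((d:ℝ) * Real.sqrt ((2 - lam) * lam) * (S m).card)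
      = (d:ℝ) * Real.sqrt ((2 - lam) * lam) * c := by
    rw [← hI1, Finset.mul_sum]
    exact Finset.sum_congr rfl fun m _ => by ring
  rw [hLHS, hI2] at hlt
  linarith
end

section
/- Let G be a d-regular graph with adjacency matrix A and let x ∈ R^n satisfy 0 ≤ x_i ≤ 1 for all i. For t ∈ (0,1) define S_t = {i : x_i ≥ t}. If t is drawn with density f(t) = 2t on (0,1), then E[|E(S_t, V\S_t)|] = (1/2) Σ_{i,j} A_{ij} |x_i^2 − x_j^2|. -/
open Finset Matrix MeasureTheory

/-- If 0 ≤ x_i ≤ 1 and t is drawn on (0,1) with density 2t, the expected number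
of edges cut by the threshold set S_t = {i : x_i ≥ t} equals
(1/2) Σ_{i,j} A_{ij} |x_i² − x_j²|. -/
theorem expected_cut_size (n d : ℕ) (hd : 0 < d)
    (A : Matrix (Fin n) (Fin n) ℝ) (hsymm : A.IsSymm)
    (h01 : ∀ i j, A i j = 0 ∨ A i j = 1) (hdiag : ∀ i, A i i = 0)
    (hreg : ∀ i, ∑ j, A i j = d)
    (x : Fin n → ℝ) (hpos : ∀ i, 0 ≤ x i) (hle : ∀ i, x i ≤ 1) :
    ∫ t in Set.Ioo (0 : ℝ) 1,
        (2 * t) * ∑ i ∈ ({i | t ≤ x i} : Finset (Fin n)),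
          ∑ j ∈ ({i | t ≤ x i} : Finset (Fin n))ᶜ, A i j
      = (1 / 2) * ∑ i, ∑ j, A i j * |x i ^ 2 - x j ^ 2| := by
  classical
  have key : ∀ t : ℝ,
      (2 * t) * ∑ i ∈ ({i | t ≤ x i} : Finset (Fin n)),
          ∑ j ∈ ({i | t ≤ x i} : Finset (Fin n))ᶜ, A i j
      = ∑ i, ∑ j, (Set.Ioc (x j) (x i)).indicator (fun s => 2 * s * A i j) t := by
    intro t
    rw [show ({i | t ≤ x i} : Finset (Fin n)) = Finset.univ.filter (fun i => t ≤ x i) from rfl,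
      Finset.compl_filter, Finset.mul_sum, Finset.sum_filter]
    refine Finset.sum_congr rfl fun i _ => ?_
    by_cases hi : t ≤ x i
    · simp only [hi, if_true, Finset.mul_sum, Finset.sum_filter]
      refine Finset.sum_congr rfl fun j _ => ?_
      by_cases hj : t ≤ x j
      · simp [Set.indicator_apply, Set.mem_Ioc, hj, not_lt.mpr hj]
      · simp [Set.indicator_apply, Set.mem_Ioc, hj, not_le.mp hj, hi]
    · simp [Set.indicator_apply, Set.mem_Ioc, hi]
  have hInt : ∀ i j : Fin n,
      IntegrableOn (fun t => (Set.Ioc (x j) (x i)).indicator (fun s => 2 * s * A i j) t)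
        (Set.Ioo (0:ℝ) 1) := by
    intro i j
    have hc : Continuous (fun s : ℝ => 2 * s * A i j) :=
      (continuous_const.mul continuous_id').mul continuous_const
    exact ((hc.integrableOn_Icc (a := 0) (b := 1)).mono_set
      Set.Ioo_subset_Icc_self).indicator measurableSet_Ioc
  have hpair : ∀ i j : Fin n,
      ∫ t in Set.Ioo (0:ℝ) 1, (Set.Ioc (x j) (x i)).indicator (fun s => 2 * s * A i j) t
      = A i j * max (x i ^ 2 - x j ^ 2) 0 := by
    intro i j
    rw [MeasureTheory.Measure.restrict_congr_set Ioo_ae_eq_Icc,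
      MeasureTheory.setIntegral_indicator measurableSet_Ioc]
    have hsub : Set.Icc (0:ℝ) 1 ∩ Set.Ioc (x j) (x i) = Set.Ioc (x j) (x i) := by
      apply Set.inter_eq_right.mpr
      rintro t ⟨h1, h2⟩
      exact ⟨(hpos j).trans h1.le, h2.trans (hle i)⟩
    rw [hsub]
    rcases le_or_gt (x j) (x i) with h | h
    · rw [← intervalIntegral.integral_of_le h,
        max_eq_left (by nlinarith [hpos i, hpos j] : (0:ℝ) ≤ x i ^ 2 - x j ^ 2)]
      simp_rw [show ∀ t : ℝ, 2 * t * A i j = (2 * A i j) * t from fun t => by ring]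
      rw [intervalIntegral.integral_const_mul, integral_id]
      ring
    · rw [Set.Ioc_eq_empty (not_lt.mpr h.le),
        max_eq_right (by nlinarith [hpos i, hpos j] : x i ^ 2 - x j ^ 2 ≤ 0)]
      simp
  have habs : ∀ a b c : ℝ, c * max (a - b) 0 + c * max (b - a) 0 = c * |a - b| := by
    intro a b c
    rcases le_total a b with h | h
    · rw [max_eq_right (by linarith), max_eq_left (by linarith), abs_of_nonpos (by linarith)]
      ring
    · rw [max_eq_left (by linarith), max_eq_right (by linarith), abs_of_nonneg (by linarith)]
      ring
  have hswap : ∑ i, ∑ j, A i j * max (x i ^ 2 - x j ^ 2) 0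
      = ∑ i, ∑ j, A i j * max (x j ^ 2 - x i ^ 2) 0 := by
    rw [Finset.sum_comm]
    exact Finset.sum_congr rfl fun i _ => Finset.sum_congr rfl fun j _ => by
      rw [← hsymm.apply i j]
  calc ∫ t in Set.Ioo (0 : ℝ) 1,
        (2 * t) * ∑ i ∈ ({i | t ≤ x i} : Finset (Fin n)),
          ∑ j ∈ ({i | t ≤ x i} : Finset (Fin n))ᶜ, A i j
      = ∫ t in Set.Ioo (0 : ℝ) 1,
          ∑ i, ∑ j, (Set.Ioc (x j) (x i)).indicator (fun s => 2 * s * A i j) t := by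
        simp_rw [key]
    _ = ∑ i, ∑ j, ∫ t in Set.Ioo (0:ℝ) 1,
          (Set.Ioc (x j) (x i)).indicator (fun s => 2 * s * A i j) t := by
        rw [MeasureTheory.integral_finset_sum _
          (fun i _ => integrable_finset_sum _ (fun j _ => hInt i j))]
        exact Finset.sum_congr rfl fun i _ =>
          MeasureTheory.integral_finset_sum _ (fun j _ => hInt i j)
    _ = ∑ i, ∑ j, A i j * max (x i ^ 2 - x j ^ 2) 0 :=
        Finset.sum_congr rfl fun i _ => Finset.sum_congr rfl fun j _ => hpair i j
    _ = (1 / 2) * ∑ i, ∑ j, A i j * |x i ^ 2 - x j ^ 2| := by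
        have h2 : (∑ i, ∑ j, A i j * max (x i ^ 2 - x j ^ 2) 0)
            + (∑ i, ∑ j, A i j * max (x j ^ 2 - x i ^ 2) 0)
            = ∑ i, ∑ j, A i j * |x i ^ 2 - x j ^ 2| := by
          rw [← Finset.sum_add_distrib]
          refine Finset.sum_congr rfl fun i _ => ?_
          rw [← Finset.sum_add_distrib]
          exact Finset.sum_congr rfl fun j _ => habs _ _ _
        linarith [hswap, h2]
end

section
/- Let G be a d-regular graph and x ∈ R^n a nonnegative vector with max coordinate 1 and Rayleigh quotient x^T L x / ||x||_2^2 = λ. Then there exists t ∈ (0,1) such that the threshold set S_t = {i : x_i ≥ t} is nonempty and satisfies φ(S_t) ≤ sqrt(λ(2 − λ)). -/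
open Finset Matrix MeasureTheory intervalIntegral

set_option maxHeartbeats 1000000

private lemma aux_ii (s : Set ℝ) (hs : MeasurableSet s) :
    IntervalIntegrable (s.indicator fun t => 2*t) volume 0 1 := by
  constructor <;>
  · apply MeasureTheory.Integrable.indicator _ hs
    exact (continuous_const.mul continuous_id).integrableOn_Ioc ..

private lemma aux_sum_ii {ι : Type*} (s : Finset ι) (f : ι → ℝ → ℝ)
    (h : ∀ i ∈ s, IntervalIntegrable (f i) volume 0 1) :
    IntervalIntegrable (fun t => ∑ i ∈ s, f i t) volume 0 1 := by
  have := IntervalIntegrable.sum s h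
  rwa [show (∑ i ∈ s, f i) = fun t => ∑ i ∈ s, f i t from funext fun t => by
    simp [Finset.sum_apply]] at this

private lemma aux_int2t (a b : ℝ) (hab : b ≤ a) :
    ∫ t in Set.Ioc b a, 2*t = a^2 - b^2 := by
  rw [← intervalIntegral.integral_of_le hab, intervalIntegral.integral_const_mul,
    integral_id]
  ring

private lemma aux_I1 (a b : ℝ) (ha : a ≤ 1) (hb : 0 ≤ b) :
    ∫ t in (0:ℝ)..1, (Set.Ioc b a).indicator (fun t => 2*t) t
      = if b ≤ a then a^2 - b^2 else 0 := by
  rw [intervalIntegral.integral_of_le zero_le_one,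
    MeasureTheory.setIntegral_indicator measurableSet_Ioc,
    Set.Ioc_inter_Ioc, max_eq_right hb, min_eq_right ha]
  split_ifs with h
  · exact aux_int2t _ _ h
  · rw [Set.Ioc_eq_empty_of_le (by push_neg at h; exact h.le)]
    simp

private lemma aux_I2 (a : ℝ) (ha : 0 ≤ a) (ha1 : a ≤ 1) :
    ∫ t in (0:ℝ)..1, (Set.Iic a).indicator (fun t => 2*t) t = a^2 := by
  rw [intervalIntegral.integral_of_le zero_le_one,
    MeasureTheory.setIntegral_indicator measurableSet_Iic]
  have : Set.Ioc 0 1 ∩ Set.Iic a = Set.Ioc 0 a := by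
    ext t; simp only [Set.mem_inter_iff, Set.mem_Iic, Set.mem_Ioc]
    constructor
    · rintro ⟨⟨h2, h3⟩, h1⟩; exact ⟨h2, h1⟩
    · rintro ⟨h1, h2⟩; exact ⟨⟨h1, h2.trans ha1⟩, h2⟩
  rw [this, aux_int2t _ _ ha]
  ring

/-- Cheeger rounding: for a nonnegative vector x with maximum coordinate 1 and
Rayleigh quotient λ with respect to the normalized Laplacian, some threshold
set S_t = {i : x_i ≥ t} is nonempty and has expansion at most sqrt(λ(2−λ)). -/
theorem cheeger_rounding (n d : ℕ) (hd : 0 < d)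
    (A : Matrix (Fin n) (Fin n) ℝ) (hsymm : A.IsSymm)
    (h01 : ∀ i j, A i j = 0 ∨ A i j = 1) (hdiag : ∀ i, A i i = 0)
    (hreg : ∀ i, ∑ j, A i j = d)
    (x : Fin n → ℝ) (hpos : ∀ i, 0 ≤ x i) (hle : ∀ i, x i ≤ 1)
    (hmax : ∃ i, x i = 1)
    (lam : ℝ)
    (hlam : (x ⬝ᵥ (1 - (d : ℝ)⁻¹ • A).mulVec x) / (x ⬝ᵥ x) = lam) :
    ∃ t ∈ Set.Ioo (0 : ℝ) 1,
      ({i | t ≤ x i} : Finset (Fin n)).Nonempty ∧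
      (∑ i ∈ ({i | t ≤ x i} : Finset (Fin n)),
          ∑ j ∈ ({i | t ≤ x i} : Finset (Fin n))ᶜ, A i j)
          / (d * ({i | t ≤ x i} : Finset (Fin n)).card)
        ≤ Real.sqrt (lam * (2 - lam)) := by
  obtain ⟨i₀, hi₀⟩ := hmax
  have hdd : (0:ℝ) < d := Nat.cast_pos.mpr hd
  set S : ℝ := x ⬝ᵥ x with hSdef
  have hS : 0 < S := by
    have : (1:ℝ) ≤ S := by
      rw [hSdef]
      calc (1:ℝ) = x i₀ * x i₀ := by rw [hi₀]; ring
      _ ≤ ∑ i, x i * x i :=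
        Finset.single_le_sum (fun i _ => mul_nonneg (hpos i) (hpos i)) (Finset.mem_univ i₀)
    linarith
  -- extract x ⬝ᵥ A *ᵥ x
  have hP : x ⬝ᵥ A.mulVec x = d*(1-lam)*S := by
    rw [div_eq_iff (ne_of_gt hS)] at hlam
    have expand : x ⬝ᵥ (1 - (d : ℝ)⁻¹ • A).mulVec x = S - (d:ℝ)⁻¹ * (x ⬝ᵥ A.mulVec x) := by
      rw [Matrix.sub_mulVec, Matrix.one_mulVec, dotProduct_sub, Matrix.smul_mulVec,
        dotProduct_smul]
      simp [smul_eq_mul, hSdef]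
    rw [expand] at hlam
    field_simp at hlam ⊢
    linarith
  have hsymm' : ∀ i j, A i j = A j i := fun i j => (hsymm.apply j i)
  have hcol : ∀ j, ∑ i, A i j = d := by
    intro j
    rw [Finset.sum_congr rfl fun i _ => (hsymm' i j)]
    exact hreg j
  have e1 : ∑ i, ∑ j, A i j * (x i)^2 = d * S := by
    rw [hSdef]; simp only [dotProduct]
    rw [Finset.mul_sum]
    refine Finset.sum_congr rfl fun i _ => ?_
    rw [← Finset.sum_mul, hreg]; ring
  have e2 : ∑ i, ∑ j, A i j * (x j)^2 = d * S := by
    rw [Finset.sum_comm, hSdef]; simp only [dotProduct]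
    rw [Finset.mul_sum]
    refine Finset.sum_congr rfl fun j _ => ?_
    rw [← Finset.sum_mul, hcol]; ring
  have e3 : ∑ i, ∑ j, A i j * (x i * x j) = d*(1-lam)*S := by
    rw [← hP]; simp only [dotProduct, mulVec, Finset.mul_sum]
    refine Finset.sum_congr rfl fun i _ => Finset.sum_congr rfl fun j _ => ?_
    ring
  have Eminus : ∑ i, ∑ j, A i j * (x i - x j)^2 = 2*d*lam*S := by
    have expand : ∀ i j : Fin n, A i j * (x i - x j)^2
        = A i j * (x i)^2 + A i j * (x j)^2 - 2*(A i j * (x i * x j)) := by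
      intros; ring
    simp only [expand, Finset.sum_sub_distrib, Finset.sum_add_distrib, ← Finset.mul_sum]
    rw [e1, e2, e3]; ring
  have Eplus : ∑ i, ∑ j, A i j * (x i + x j)^2 = 2*d*(2-lam)*S := by
    have expand : ∀ i j : Fin n, A i j * (x i + x j)^2
        = A i j * (x i)^2 + A i j * (x j)^2 + 2*(A i j * (x i * x j)) := by
      intros; ring
    simp only [expand, Finset.sum_add_distrib, ← Finset.mul_sum]
    rw [e1, e2, e3]; ring
  set c := Real.sqrt (lam*(2-lam)) with hc
  -- the key Cauchy–Schwarz bound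
  have KB : ∑ i, ∑ j, A i j * (if x j ≤ x i then x i^2 - x j^2 else 0) ≤ c * (d * S) := by
    set V : Fin n → Fin n → ℝ := fun i j => if x j ≤ x i then x i^2 - x j^2 else 0 with hV
    have hAsq : ∀ i j, A i j * A i j = A i j := by
      intro i j; rcases h01 i j with h | h <;> rw [h] <;> ring
    have sym : ∑ i, ∑ j, A i j * V j i = ∑ i, ∑ j, A i j * V i j := by
      rw [Finset.sum_comm]
      exact Finset.sum_congr rfl fun j _ => Finset.sum_congr rfl fun i _ => by
        rw [hsymm' i j]
    have habs : ∀ i j, A i j * V i j + A i j * V j i = A i j * |x i^2 - x j^2| := by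
      intro i j
      simp only [hV]
      rcases le_total (x j) (x i) with h | h
      · rw [if_pos h, abs_of_nonneg (by nlinarith [hpos i, hpos j])]
        rcases eq_or_lt_of_le h with h' | h'
        · rw [if_pos h'.ge, h']; ring
        · rw [if_neg (not_le.mpr h')]; ring
      · rw [if_pos h, abs_of_nonpos (by nlinarith [hpos i, hpos j])]
        rcases eq_or_lt_of_le h with h' | h'
        · rw [if_pos h'.ge, h']; ring
        · rw [if_neg (not_le.mpr h')]; ring
    have key : 2 * (∑ i, ∑ j, A i j * V i j) = ∑ i, ∑ j, A i j * |x i^2 - x j^2| := by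
      rw [two_mul]
      nth_rewrite 2 [← sym]
      rw [← Finset.sum_add_distrib]
      refine Finset.sum_congr rfl fun i _ => ?_
      rw [← Finset.sum_add_distrib]
      exact Finset.sum_congr rfl fun j _ => habs i j
    have prodform : ∑ i, ∑ j, A i j * |x i^2 - x j^2|
        = ∑ p ∈ (univ ×ˢ univ : Finset (Fin n × Fin n)),
            (A p.1 p.2 * |x p.1 - x p.2|) * (A p.1 p.2 * (x p.1 + x p.2)) := by
      rw [Finset.sum_product]
      refine Finset.sum_congr rfl fun i _ => Finset.sum_congr rfl fun j _ => ?_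
      have : |x i^2 - x j^2| = |x i - x j| * (x i + x j) := by
        rw [← abs_of_nonneg (by nlinarith [hpos i, hpos j] : (0:ℝ) ≤ x i + x j), ← abs_mul]
        congr 1; ring
      rcases h01 i j with h | h
      · simp [h]
      · rw [h, this]; ring
    have cs := Real.sum_mul_le_sqrt_mul_sqrt (univ ×ˢ univ : Finset (Fin n × Fin n))
        (fun p => A p.1 p.2 * |x p.1 - x p.2|) (fun p => A p.1 p.2 * (x p.1 + x p.2))
    have sq1 : ∑ p ∈ (univ ×ˢ univ : Finset (Fin n × Fin n)),
        (A p.1 p.2 * |x p.1 - x p.2|)^2 = 2*d*lam*S := by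
      rw [← Eminus, Finset.sum_product]
      refine Finset.sum_congr rfl fun i _ => Finset.sum_congr rfl fun j _ => ?_
      rcases h01 i j with h | h
      · simp [h]
      · rw [h, one_mul, one_mul, sq_abs]
    have sq2 : ∑ p ∈ (univ ×ˢ univ : Finset (Fin n × Fin n)),
        (A p.1 p.2 * (x p.1 + x p.2))^2 = 2*d*(2-lam)*S := by
      rw [← Eplus, Finset.sum_product]
      refine Finset.sum_congr rfl fun i _ => Finset.sum_congr rfl fun j _ => ?_
      rcases h01 i j with h | h
      · simp [h]
      · rw [h]; ring
    rw [sq1, sq2] at cs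
    have hlam0 : 0 ≤ lam := by
      have : 0 ≤ ∑ i, ∑ j, A i j * (x i - x j)^2 :=
        Finset.sum_nonneg fun i _ => Finset.sum_nonneg fun j _ =>
          mul_nonneg (by rcases h01 i j with h|h <;> simp [h]) (sq_nonneg _)
      rw [Eminus] at this
      nlinarith [mul_pos hdd hS]
    have hlam2 : lam ≤ 2 := by
      have : 0 ≤ ∑ i, ∑ j, A i j * (x i + x j)^2 :=
        Finset.sum_nonneg fun i _ => Finset.sum_nonneg fun j _ =>
          mul_nonneg (by rcases h01 i j with h|h <;> simp [h]) (sq_nonneg _)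
      rw [Eplus] at this
      nlinarith [mul_pos hdd hS]
    have sqrtprod : Real.sqrt (2*d*lam*S) * Real.sqrt (2*d*(2-lam)*S) = 2*(d*S)*c := by
      rw [← Real.sqrt_mul (by positivity)]
      have : (2*d*lam*S) * (2*d*(2-lam)*S) = (2*(d*S))^2 * (lam*(2-lam)) := by ring
      rw [this, Real.sqrt_mul (sq_nonneg _), Real.sqrt_sq (by positivity)]
    rw [sqrtprod] at cs
    rw [prodform] at key
    linarith
  -- the averaging argument
  by_contra hcon
  push_neg at hcon
  set g : ℝ → ℝ := fun t =>
    (∑ i, ∑ j, A i j * ((Set.Ioc (x j) (x i)).indicator (fun u => 2*u) t))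
      - c * d * (∑ i, (Set.Iic (x i)).indicator (fun u => 2*u) t) with hg
  have hgint : IntervalIntegrable g volume 0 1 := by
    apply IntervalIntegrable.sub
    · exact aux_sum_ii _ _ fun i _ => aux_sum_ii _ _ fun j _ =>
        (aux_ii _ measurableSet_Ioc).const_mul (A i j)
    · exact (aux_sum_ii _ _ fun i _ => aux_ii _ measurableSet_Iic).const_mul _
  have hint1 : ∀ i ∈ (univ : Finset (Fin n)), ∀ j ∈ (univ : Finset (Fin n)),
      IntervalIntegrable (fun t => A i j * ((Set.Ioc (x j) (x i)).indicator (fun u => 2*u) t))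
        volume 0 1 := fun i _ j _ => (aux_ii _ measurableSet_Ioc).const_mul (A i j)
  have hintval : ∫ t in (0:ℝ)..1, g t = (∑ i, ∑ j, A i j * (if x j ≤ x i then x i^2 - x j^2 else 0)) - c * d * S := by
    rw [hg]
    rw [intervalIntegral.integral_sub
      (aux_sum_ii _ _ fun i _ => aux_sum_ii _ _ (hint1 i (mem_univ i)))
      ((aux_sum_ii _ _ fun i _ => aux_ii _ measurableSet_Iic).const_mul _)]
    congr 1
    · rw [intervalIntegral.integral_finset_sum
        (fun i _ => aux_sum_ii _ _ (hint1 i (mem_univ i)))]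
      refine Finset.sum_congr rfl fun i _ => ?_
      rw [intervalIntegral.integral_finset_sum (hint1 i (mem_univ i))]
      refine Finset.sum_congr rfl fun j _ => ?_
      rw [intervalIntegral.integral_const_mul, aux_I1 _ _ (hle i) (hpos j)]
    · rw [intervalIntegral.integral_const_mul,
        intervalIntegral.integral_finset_sum (fun i _ => aux_ii _ measurableSet_Iic)]
      have : ∑ i, ∫ t in (0:ℝ)..1, (Set.Iic (x i)).indicator (fun u => 2*u) t
          = ∑ i, x i ^ 2 := Finset.sum_congr rfl fun i _ => aux_I2 _ (hpos i) (hle i)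
      rw [this]
      have : ∑ i, x i ^ 2 = S := by
        rw [hSdef]; simp only [dotProduct]
        exact Finset.sum_congr rfl fun i _ => sq (x i) ▸ by ring
      rw [this]
  have hile : ∫ t in (0:ℝ)..1, g t ≤ 0 := by
    rw [hintval]; nlinarith [KB]
  have hgpos : ∀ t ∈ Set.Ioo (0:ℝ) 1, 0 < g t := by
    intro t ht
    set F : Finset (Fin n) := ({i | t ≤ x i} : Finset (Fin n)) with hF
    have hmemF : ∀ i, i ∈ F ↔ t ≤ x i := by intro i; simp [hF]
    have hne : F.Nonempty := ⟨i₀, (hmemF i₀).mpr (by rw [hi₀]; exact ht.2.le)⟩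
    have hcardpos : (0:ℝ) < d * F.card := by
      have := hne.card_pos
      positivity
    have hr := hcon t ht hne
    have hcut : c * (d * F.card) < ∑ i ∈ F, ∑ j ∈ Fᶜ, A i j :=
      (lt_div_iff₀ hcardpos).mp hr
    have claim1 : ∑ i, ∑ j, A i j * ((Set.Ioc (x j) (x i)).indicator (fun u => 2*u) t)
        = 2*t*(∑ i ∈ F, ∑ j ∈ Fᶜ, A i j) := by
      rw [Finset.mul_sum]
      rw [← Finset.sum_subset (Finset.subset_univ F) (fun i _ hi => ?_)]
      · refine Finset.sum_congr rfl fun i hi => ?_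
        have hti : t ≤ x i := (hmemF i).mp hi
        rw [Finset.mul_sum]
        rw [← Finset.sum_subset (Finset.subset_univ Fᶜ) (fun j _ hj => ?_)]
        · refine Finset.sum_congr rfl fun j hj => ?_
          have htj : x j < t := by
            have := (Finset.mem_compl.mp hj)
            rw [hmemF j] at this
            exact not_le.mp this
          rw [Set.indicator_of_mem (Set.mem_Ioc.mpr ⟨htj, hti⟩)]
          ring
        · have htj : t ≤ x j := (hmemF j).mp (by simpa using hj)
          rw [Set.indicator_of_notMem (fun hmem => absurd (Set.mem_Ioc.mp hmem).1 (not_lt.mpr htj))]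
          ring
      · have hti : ¬ t ≤ x i := by rw [← hmemF i]; exact hi
        apply Finset.sum_eq_zero; intro j _
        rw [Set.indicator_of_notMem (fun hmem => absurd (Set.mem_Ioc.mp hmem).2 hti)]
        ring
    have claim2 : ∑ i, (Set.Iic (x i)).indicator (fun u => 2*u) t = 2*t*(F.card) := by
      rw [← Finset.sum_subset (Finset.subset_univ F) (fun i _ hi => ?_)]
      · rw [Finset.sum_congr rfl (fun i hi =>
          Set.indicator_of_mem (Set.mem_Iic.mpr ((hmemF i).mp hi)) (fun u => 2*u)),
          Finset.sum_const, nsmul_eq_mul]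
        ring
      · have hti : ¬ t ≤ x i := by rw [← hmemF i]; exact hi
        exact Set.indicator_of_notMem (fun hmem => absurd (Set.mem_Iic.mp hmem) hti) _
    rw [hg]
    simp only [claim1, claim2]
    have ht0 : 0 < t := ht.1
    nlinarith [hcut]
  have := intervalIntegral.intervalIntegral_pos_of_pos_on hgint hgpos zero_lt_one
  linarith
end

section
/- Let G be a d-regular graph and x ∈ R^n a δn-sparse vector with Rayleigh quotient λ. Then every threshold set S_t = {i : |normalized x|_i ≥ t} for t > 0 has size at most δn, and consequently the sparse Cheeger rounding produces a small set: there exists a nonempty S with |S| ≤ δn and φ(S) ≤ sqrt(λ(2−λ)). -/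
open Finset Matrix

/-- In `Fin n`, a downward-closed predicate holds exactly on an initial segment. -/
lemma lowerSet_iff_lt_card {n : ℕ} (P : Fin n → Prop) [DecidablePred P]
    (hP : ∀ r s : Fin n, r ≤ s → P s → P r) (r : Fin n) :
    P r ↔ (r : ℕ) < (Finset.univ.filter P).card := by
  constructor
  · intro h
    have hsub : Finset.Iic r ⊆ Finset.univ.filter P := by
      intro s hs
      simp only [Finset.mem_Iic] at hs
      simp only [Finset.mem_filter, Finset.mem_univ, true_and]
      exact hP s r hs h
    have := Finset.card_le_card hsub
    rw [Fin.card_Iic] at this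
    omega
  · intro h
    by_contra hPr
    have hsub : Finset.univ.filter P ⊆ Finset.Iio r := by
      intro s hs
      simp only [Finset.mem_filter, Finset.mem_univ, true_and] at hs
      simp only [Finset.mem_Iio]
      by_contra hle
      exact hPr (hP r s (le_of_not_gt hle) hs)
    have := Finset.card_le_card hsub
    rw [Fin.card_Iio] at this
    omega

/-- Discrete layer-cake identity for a monotone nonnegative tuple. -/
lemma layerCake {n : ℕ} (u : Fin n → ℝ) (hmono : Monotone u)
    (F : ℕ → ℝ) (hF0 : F 0 = 0) (hFk : ∀ k (h : k - 1 < n), k ≠ 0 → F k = u ⟨k - 1, h⟩)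
    (a : ℝ) (ha : ∃ r, u r = a) :
    ∑ r ∈ Finset.range n, (F (r + 1) - F r) * (if F (r + 1) ≤ a then (1 : ℝ) else 0) = a := by
  classical
  obtain ⟨r₀, hr₀⟩ := ha
  set K := (Finset.univ.filter (fun r : Fin n => u r ≤ a)).card with hK
  have hdc : ∀ r s : Fin n, r ≤ s → u s ≤ a → u r ≤ a := fun r s hrs h => le_trans (hmono hrs) h
  have hiff : ∀ r : Fin n, u r ≤ a ↔ (r : ℕ) < K := fun r => lowerSet_iff_lt_card _ hdc r
  have hKpos : 0 < K := by
    have := (hiff r₀).mp (le_of_eq hr₀)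
    omega
  have hKn : K ≤ n := by
    have := Finset.card_filter_le (Finset.univ : Finset (Fin n)) (fun r => u r ≤ a)
    simpa using this
  have hFs : ∀ r : Fin n, F ((r : ℕ) + 1) = u r := by
    intro r
    have h1 : (r : ℕ) + 1 - 1 < n := by simp
    rw [hFk ((r : ℕ) + 1) h1 (Nat.succ_ne_zero _)]
    exact congrArg u (Fin.ext (by simp))
  have hstep : ∀ r ∈ Finset.range n,
      (F (r + 1) - F r) * (if F (r + 1) ≤ a then (1 : ℝ) else 0)
        = if r ∈ Finset.range K then F (r + 1) - F r else 0 := by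
    intro r hr
    rw [Finset.mem_range] at hr
    have he : F (r + 1) = u ⟨r, hr⟩ := hFs ⟨r, hr⟩
    by_cases hle : F (r + 1) ≤ a
    · have : r < K := by
        have := (hiff ⟨r, hr⟩).mp (he ▸ hle)
        simpa using this
      simp [hle, Finset.mem_range, this]
    · have : ¬ r < K := by
        intro h
        exact hle (he ▸ ((hiff ⟨r, hr⟩).mpr (by simpa using h)))
      simp [hle, Finset.mem_range, this]
  rw [Finset.sum_congr rfl hstep, Finset.sum_ite_mem]
  have hint : Finset.range n ∩ Finset.range K = Finset.range K := by
    ext s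
    simp only [Finset.mem_inter, Finset.mem_range]
    omega
  rw [hint, Finset.sum_range_sub F K, hF0, sub_zero]
  have hK1n : K - 1 < n := by omega
  have hKne : K ≠ 0 := by omega
  rw [hFk K hK1n hKne]
  apply le_antisymm
  · exact (hiff ⟨K - 1, hK1n⟩).mpr (by simp; omega)
  · have hr : ((r₀ : ℕ)) < K := (hiff r₀).mp (le_of_eq hr₀)
    have : u r₀ ≤ u ⟨K - 1, hK1n⟩ := hmono (by rw [Fin.le_def]; simp; omega)
    linarith [hr₀ ▸ this]

set_option maxHeartbeats 2000000 in
/-- Sparse Cheeger rounding: if x is a nonzero δn-sparse vector with Rayleigh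
quotient λ, then (a) every threshold set of the normalized vector
y_i = |x_i| / max_j |x_j| (for t > 0) has size at most δn, and (b) there exists
a nonempty set S with |S| ≤ δn and φ(S) ≤ sqrt(λ(2−λ)). -/
theorem sparse_cheeger_rounding (n d : ℕ) (hd : 0 < d)
    (A : Matrix (Fin n) (Fin n) ℝ) (hsymm : A.IsSymm)
    (h01 : ∀ i j, A i j = 0 ∨ A i j = 1) (hdiag : ∀ i, A i i = 0)
    (hreg : ∀ i, ∑ j, A i j = d)
    (δ : ℝ) (x : Fin n → ℝ) (hx : x ≠ 0)
    (hsparse : ((Function.support x).ncard : ℝ) ≤ δ * n)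
    (m : ℝ) (hm : IsGreatest (Set.range fun j => |x j|) m)
    (lam : ℝ)
    (hlam : (x ⬝ᵥ (1 - (d : ℝ)⁻¹ • A).mulVec x) / (x ⬝ᵥ x) = lam) :
    (∀ t : ℝ, 0 < t → t ≤ 1 →
        ((({i | t ≤ |x i| / m} : Finset (Fin n)).card : ℝ) ≤ δ * n)) ∧
    ∃ S : Finset (Fin n), S.Nonempty ∧ ((S.card : ℝ) ≤ δ * n) ∧
      (∑ i ∈ S, ∑ j ∈ Sᶜ, A i j) / (d * S.card)
        ≤ Real.sqrt (lam * (2 - lam)) := by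
  classical
  obtain ⟨i₀, hi₀⟩ : ∃ i, x i ≠ 0 := Function.ne_iff.mp hx
  have hn : 0 < n := i₀.pos
  have hm0 : 0 < m := lt_of_lt_of_le (abs_pos.mpr hi₀) (hm.2 ⟨i₀, rfl⟩)
  -- any finset of non-vanishing coordinates has size at most δn
  have hsuppcard : ∀ S : Finset (Fin n), (∀ i ∈ S, x i ≠ 0) → ((S.card : ℝ) ≤ δ * n) := by
    intro S hS
    have h1 : (S : Set (Fin n)) ⊆ Function.support x := by
      intro i hi
      exact hS i (by simpa using hi)
    have h3 : (S : Set (Fin n)).ncard ≤ (Function.support x).ncard :=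
      Set.ncard_le_ncard h1 (Set.toFinite _)
    calc (S.card : ℝ) = ((S : Set (Fin n)).ncard : ℝ) := by rw [Set.ncard_coe_finset]
      _ ≤ ((Function.support x).ncard : ℝ) := by exact_mod_cast h3
      _ ≤ δ * n := hsparse
  constructor
  · -- part (a)
    intro t ht _
    apply hsuppcard
    intro i hi
    intro h0
    have : t ≤ |x i| / m := by simpa using hi
    rw [h0] at this
    simp only [abs_zero, zero_div] at this
    linarith
  · -- part (b)
    by_contra hcon
    push_neg at hcon
    set c := Real.sqrt (lam * (2 - lam)) with hcdef
    set g : Fin n → ℝ := fun i => x i ^ 2 with hgdef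
    set σ := Tuple.sort g with hσdef
    have hmono : Monotone (g ∘ σ) := Tuple.monotone_sort g
    have hgnn : ∀ i, 0 ≤ g i := fun i => sq_nonneg _
    obtain ⟨F, hF0, hFk⟩ : ∃ F : ℕ → ℝ, F 0 = 0 ∧
        ∀ k (h : k - 1 < n), k ≠ 0 → F k = g (σ ⟨k - 1, h⟩) :=
      ⟨fun k => if h : k - 1 < n ∧ k ≠ 0 then g (σ ⟨k - 1, h.1⟩) else 0,
        by simp, fun k h hk => by simp [h, hk]⟩
    have hFs : ∀ r : Fin n, F ((r : ℕ) + 1) = g (σ r) := by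
      intro r
      have h1 : (r : ℕ) + 1 - 1 < n := by simp
      rw [hFk ((r : ℕ) + 1) h1 (Nat.succ_ne_zero _)]
      exact congrArg (g ∘ σ) (Fin.ext (by simp))
    have hFnn : ∀ k, k ≤ n → 0 ≤ F k := by
      intro k hk
      rcases Nat.eq_zero_or_pos k with h0 | h0
      · rw [h0, hF0]
      · rw [hFk k (by omega) (by omega)]
        exact hgnn _
    have hFmono : ∀ r, r < n → F r ≤ F (r + 1) := by
      intro r hr
      rcases Nat.eq_zero_or_pos r with h0 | h0
      · rw [h0, hF0]
        exact hFnn 1 (by omega)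
      · rw [hFk r (by omega) (by omega), hFk (r + 1) (by simpa using hr) (by omega)]
        exact hmono (by simp [Fin.le_def])
    have hlayer : ∀ i : Fin n,
        ∑ r ∈ Finset.range n, (F (r + 1) - F r) * (if F (r + 1) ≤ g i then (1 : ℝ) else 0) = g i := by
      intro i
      exact layerCake (g ∘ σ) hmono F hF0 hFk (g i) ⟨σ⁻¹ i, by simp⟩
    -- threshold sets
    set S : ℕ → Finset (Fin n) := fun r => Finset.univ.filter (fun i => F (r + 1) ≤ g i)
      with hSdef
    have hSmem : ∀ r (i : Fin n), i ∈ S r ↔ F (r + 1) ≤ g i := by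
      intro r i
      rw [hSdef]
      simp
    -- basic quantities
    set X := ∑ i, x i ^ 2 with hXdef
    have hXg : ∑ i, g i = X := rfl
    have hX : 0 < X := by
      rw [hXdef]
      exact Finset.sum_pos' (fun i _ => sq_nonneg _)
        ⟨i₀, Finset.mem_univ _, by positivity⟩
    have hAnn : ∀ i j, 0 ≤ A i j := by
      intro i j
      rcases h01 i j with h | h <;> rw [h] <;> norm_num
    have hA2 : ∀ i j, A i j * A i j = A i j := by
      intro i j
      rcases h01 i j with h | h <;> rw [h] <;> norm_num
    have hcol : ∀ j, ∑ i, A i j = d := by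
      intro j
      rw [← hreg j]
      exact Finset.sum_congr rfl fun i _ => hsymm.apply j i
    set B := ∑ i, ∑ j, A i j * (|x i| * |x j|) with hBdef
    set C := ∑ i, ∑ j, x i * (A i j * x j) with hCdef
    have hCval : x ⬝ᵥ A.mulVec x = C := by
      rw [hCdef]
      simp only [dotProduct, Matrix.mulVec, Finset.mul_sum]
    have hdne : (d : ℝ) ≠ 0 := by positivity
    have hC : C = (1 - lam) * ((d : ℝ) * X) := by
      have hxx : x ⬝ᵥ x = X := by
        rw [hXdef]
        simp [dotProduct, sq]
      have hexp : x ⬝ᵥ (1 - (d : ℝ)⁻¹ • A).mulVec x = X - (d : ℝ)⁻¹ * C := by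
        rw [Matrix.sub_mulVec, Matrix.one_mulVec, dotProduct_sub, hxx]
        congr 1
        rw [Matrix.smul_mulVec, dotProduct_smul, smul_eq_mul, hCval]
      rw [hexp, hxx, div_eq_iff (ne_of_gt hX)] at hlam
      field_simp at hlam ⊢
      linarith
    have hCB : |C| ≤ B := by
      rw [hCdef, hBdef]
      calc |∑ i, ∑ j, x i * (A i j * x j)| ≤ ∑ i, |∑ j, x i * (A i j * x j)| :=
            Finset.abs_sum_le_sum_abs _ _
        _ ≤ ∑ i, ∑ j, |x i * (A i j * x j)| :=
            Finset.sum_le_sum fun i _ => Finset.abs_sum_le_sum_abs _ _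
        _ = ∑ i, ∑ j, A i j * (|x i| * |x j|) := by
            apply Finset.sum_congr rfl
            intro i _
            apply Finset.sum_congr rfl
            intro j _
            rw [abs_mul, abs_mul, abs_of_nonneg (hAnn i j)]
            ring
    -- row/column sum identities
    have hrowsum : ∀ f : Fin n → ℝ, ∑ i, ∑ j, A i j * f i = (d : ℝ) * ∑ i, f i := by
      intro f
      rw [Finset.mul_sum]
      apply Finset.sum_congr rfl
      intro i _
      rw [← Finset.sum_mul, hreg]
    have hcolsum : ∀ f : Fin n → ℝ, ∑ i, ∑ j, A i j * f j = (d : ℝ) * ∑ j, f j := by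
      intro f
      rw [Finset.sum_comm, Finset.mul_sum]
      apply Finset.sum_congr rfl
      intro j _
      rw [← Finset.sum_mul, hcol]
    have habsX : ∑ i, |x i| ^ 2 = X := by
      rw [hXdef]
      exact Finset.sum_congr rfl fun i _ => sq_abs _
    have hP : ∑ i, ∑ j, A i j * (|x i| - |x j|) ^ 2 = 2 * ((d : ℝ) * X - B) := by
      calc ∑ i, ∑ j, A i j * (|x i| - |x j|) ^ 2
          = ∑ i, ∑ j, (A i j * |x i| ^ 2 + A i j * |x j| ^ 2
              - 2 * (A i j * (|x i| * |x j|))) :=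
            Finset.sum_congr rfl fun i _ => Finset.sum_congr rfl fun j _ => by ring
        _ = (∑ i, ∑ j, A i j * |x i| ^ 2) + (∑ i, ∑ j, A i j * |x j| ^ 2)
              - 2 * (∑ i, ∑ j, A i j * (|x i| * |x j|)) := by
            simp only [Finset.sum_add_distrib, Finset.sum_sub_distrib, ← Finset.mul_sum]
        _ = 2 * ((d : ℝ) * X - B) := by
            rw [hrowsum (fun i => |x i| ^ 2), hcolsum (fun j => |x j| ^ 2), habsX, ← hBdef]
            ring
    have hP' : ∑ i, ∑ j, A i j * (|x i| + |x j|) ^ 2 = 2 * ((d : ℝ) * X + B) := by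
      calc ∑ i, ∑ j, A i j * (|x i| + |x j|) ^ 2
          = ∑ i, ∑ j, (A i j * |x i| ^ 2 + A i j * |x j| ^ 2
              + 2 * (A i j * (|x i| * |x j|))) :=
            Finset.sum_congr rfl fun i _ => Finset.sum_congr rfl fun j _ => by ring
        _ = ((∑ i, ∑ j, A i j * |x i| ^ 2) + (∑ i, ∑ j, A i j * |x j| ^ 2))
              + 2 * (∑ i, ∑ j, A i j * (|x i| * |x j|)) := by
            simp only [Finset.sum_add_distrib, ← Finset.mul_sum]
        _ = 2 * ((d : ℝ) * X + B) := by
            rw [hrowsum (fun i => |x i| ^ 2), hcolsum (fun j => |x j| ^ 2), habsX, ← hBdef]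
            ring
    have hPnn : 0 ≤ 2 * ((d : ℝ) * X - B) := by
      rw [← hP]
      exact Finset.sum_nonneg fun i _ => Finset.sum_nonneg fun j _ =>
        mul_nonneg (hAnn i j) (sq_nonneg _)
    have hP'nn : 0 ≤ 2 * ((d : ℝ) * X + B) := by
      rw [← hP']
      exact Finset.sum_nonneg fun i _ => Finset.sum_nonneg fun j _ =>
        mul_nonneg (hAnn i j) (sq_nonneg _)
    have hB2 : B ^ 2 ≤ ((d : ℝ) * X) ^ 2 := sq_le_sq' (by linarith) (by linarith)
    have hC2 : C ^ 2 ≤ B ^ 2 := by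
      have h := abs_le.mp hCB
      exact sq_le_sq' (by linarith [h.1]) h.2
    have hdX : 0 < (d : ℝ) * X := by positivity
    have hlamnn : 0 ≤ lam * (2 - lam) := by
      have h5 : ((1 - lam) * ((d : ℝ) * X)) ^ 2 ≤ ((d : ℝ) * X) ^ 2 := by
        rw [← hC]; exact le_trans hC2 hB2
      nlinarith [h5, mul_pos hdX hdX]
    have hc2 : c ^ 2 = lam * (2 - lam) := Real.sq_sqrt hlamnn
    have hcnn : 0 ≤ c := Real.sqrt_nonneg _
    -- Cauchy–Schwarz bound on the total variation sum
    set LHS := ∑ i, ∑ j, A i j * |g i - g j| with hLHSdef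
    have hLnn : 0 ≤ LHS := by
      rw [hLHSdef]
      exact Finset.sum_nonneg fun i _ => Finset.sum_nonneg fun j _ =>
        mul_nonneg (hAnn i j) (abs_nonneg _)
    have hLle : LHS ≤ 2 * ((d : ℝ) * X) * c := by
      have key : LHS = ∑ p ∈ Finset.univ ×ˢ Finset.univ,
          (A p.1 p.2 * |(|x p.1|) - (|x p.2|)|) * (A p.1 p.2 * ((|x p.1|) + (|x p.2|))) := by
        rw [hLHSdef, Finset.sum_product]
        refine Finset.sum_congr rfl fun i _ => Finset.sum_congr rfl fun j _ => ?_
        dsimp only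
        have h1 : |g i - g j| = |(|x i|) - (|x j|)| * ((|x i|) + (|x j|)) := by
          simp only [hgdef]
          rw [show x i ^ 2 = |x i| ^ 2 from (sq_abs _).symm,
            show x j ^ 2 = |x j| ^ 2 from (sq_abs _).symm,
            show |x i| ^ 2 - |x j| ^ 2 = (|x i| - |x j|) * (|x i| + |x j|) from by ring,
            abs_mul, abs_of_nonneg (by positivity : (0:ℝ) ≤ |x i| + |x j|)]
        rw [h1]
        linear_combination (-(|(|x i|) - (|x j|)|) * ((|x i|) + (|x j|))) * (hA2 i j)
      have hCS := Finset.sum_mul_sq_le_sq_mul_sq (Finset.univ ×ˢ Finset.univ)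
        (fun p : Fin n × Fin n => A p.1 p.2 * |(|x p.1|) - (|x p.2|)|)
        (fun p : Fin n × Fin n => A p.1 p.2 * ((|x p.1|) + (|x p.2|)))
      have e1 : ∑ p ∈ Finset.univ ×ˢ Finset.univ,
          (A p.1 p.2 * |(|x p.1|) - (|x p.2|)|) ^ 2 = 2 * ((d : ℝ) * X - B) := by
        rw [← hP, Finset.sum_product]
        refine Finset.sum_congr rfl fun i _ => Finset.sum_congr rfl fun j _ => ?_
        dsimp only
        rw [mul_pow, sq_abs, pow_two, hA2]
      have e2 : ∑ p ∈ Finset.univ ×ˢ Finset.univ,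
          (A p.1 p.2 * ((|x p.1|) + (|x p.2|))) ^ 2 = 2 * ((d : ℝ) * X + B) := by
        rw [← hP', Finset.sum_product]
        refine Finset.sum_congr rfl fun i _ => Finset.sum_congr rfl fun j _ => ?_
        dsimp only
        rw [mul_pow, pow_two, hA2]
      have h2 : LHS ^ 2 ≤ (2 * ((d : ℝ) * X - B)) * (2 * ((d : ℝ) * X + B)) := by
        rw [key, ← e1, ← e2]
        simpa using hCS
      have h6 : ((1 - lam) * ((d : ℝ) * X)) ^ 2 ≤ B ^ 2 := hC ▸ hC2
      have h4 : (2 * ((d : ℝ) * X - B)) * (2 * ((d : ℝ) * X + B))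
          ≤ (2 * ((d : ℝ) * X) * c) ^ 2 := by
        rw [show (2 * ((d : ℝ) * X) * c) ^ 2 = 4 * (((d : ℝ) * X) ^ 2 * c ^ 2) from by ring,
          hc2]
        nlinarith [h6]
      have hrhsnn : (0:ℝ) ≤ 2 * ((d : ℝ) * X) * c := by positivity
      calc LHS = Real.sqrt (LHS ^ 2) := (Real.sqrt_sq hLnn).symm
        _ ≤ Real.sqrt ((2 * ((d : ℝ) * X) * c) ^ 2) := Real.sqrt_le_sqrt (le_trans h2 h4)
        _ = 2 * ((d : ℝ) * X) * c := Real.sqrt_sq hrhsnn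
    -- the sweep lower bound
    have hEr : ∀ r : ℕ, (∑ i ∈ S r, ∑ j ∈ (S r)ᶜ, A i j)
        = ∑ i, ∑ j, A i j * ((if F (r + 1) ≤ g i then (1:ℝ) else 0)
            * (1 - if F (r + 1) ≤ g j then (1:ℝ) else 0)) := by
      intro r
      calc ∑ i ∈ S r, ∑ j ∈ (S r)ᶜ, A i j
          = ∑ i, (if i ∈ S r then ∑ j ∈ (S r)ᶜ, A i j else 0) := by
            rw [Finset.sum_ite_mem, Finset.univ_inter]
        _ = ∑ i, (if i ∈ S r then (∑ j, if j ∈ (S r)ᶜ then A i j else 0) else 0) := by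
            refine Finset.sum_congr rfl fun i _ => ?_
            rw [Finset.sum_ite_mem, Finset.univ_inter]
        _ = ∑ i, ∑ j, A i j * ((if F (r + 1) ≤ g i then (1:ℝ) else 0)
              * (1 - if F (r + 1) ≤ g j then (1:ℝ) else 0)) := by
            refine Finset.sum_congr rfl fun i _ => ?_
            by_cases h1 : F (r + 1) ≤ g i
            · rw [if_pos ((hSmem r i).mpr h1)]
              refine Finset.sum_congr rfl fun j _ => ?_
              by_cases h2 : F (r + 1) ≤ g j
              · have hj : j ∉ (S r)ᶜ := by
                  simp only [Finset.mem_compl, not_not, hSmem]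
                  exact h2
                simp [hj, h1, h2]
              · have hj : j ∈ (S r)ᶜ := by
                  simp only [Finset.mem_compl, hSmem]
                  exact h2
                simp [hj, h1, h2]
            · rw [if_neg (fun hmem => h1 ((hSmem r i).mp hmem)), eq_comm]
              refine Finset.sum_eq_zero fun j _ => ?_
              simp [h1]
    have hD : ∀ r : ℕ,
        (∑ i, ∑ j, A i j * |(if F (r + 1) ≤ g i then (1 : ℝ) else 0)
            - (if F (r + 1) ≤ g j then (1 : ℝ) else 0)|)
          = 2 * (∑ i ∈ S r, ∑ j ∈ (S r)ᶜ, A i j) := by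
      intro r
      have hsplit : ∀ i j : Fin n, A i j * |(if F (r + 1) ≤ g i then (1:ℝ) else 0)
            - (if F (r + 1) ≤ g j then (1:ℝ) else 0)|
          = A i j * ((if F (r + 1) ≤ g i then (1:ℝ) else 0)
              * (1 - if F (r + 1) ≤ g j then (1:ℝ) else 0))
            + A i j * ((if F (r + 1) ≤ g j then (1:ℝ) else 0)
              * (1 - if F (r + 1) ≤ g i then (1:ℝ) else 0)) := by
        intro i j
        by_cases h1 : F (r + 1) ≤ g i <;> by_cases h2 : F (r + 1) ≤ g j <;>
          simp [h1, h2]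
      have h2 : (∑ i, ∑ j, A i j * ((if F (r + 1) ≤ g j then (1:ℝ) else 0)
            * (1 - if F (r + 1) ≤ g i then (1:ℝ) else 0)))
          = ∑ i ∈ S r, ∑ j ∈ (S r)ᶜ, A i j := by
        rw [Finset.sum_comm]
        calc ∑ b : Fin n, ∑ a : Fin n, A a b * ((if F (r + 1) ≤ g b then (1:ℝ) else 0)
              * (1 - if F (r + 1) ≤ g a then (1:ℝ) else 0))
            = ∑ b : Fin n, ∑ a : Fin n, A b a * ((if F (r + 1) ≤ g b then (1:ℝ) else 0)
              * (1 - if F (r + 1) ≤ g a then (1:ℝ) else 0)) :=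
              Finset.sum_congr rfl fun b _ => Finset.sum_congr rfl fun a _ => by
                rw [hsymm.apply b a]
          _ = ∑ i ∈ S r, ∑ j ∈ (S r)ᶜ, A i j := (hEr r).symm
      calc (∑ i, ∑ j, A i j * |(if F (r + 1) ≤ g i then (1 : ℝ) else 0)
            - (if F (r + 1) ≤ g j then (1 : ℝ) else 0)|)
          = ∑ i, ∑ j, (A i j * ((if F (r + 1) ≤ g i then (1:ℝ) else 0)
              * (1 - if F (r + 1) ≤ g j then (1:ℝ) else 0))
            + A i j * ((if F (r + 1) ≤ g j then (1:ℝ) else 0)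
              * (1 - if F (r + 1) ≤ g i then (1:ℝ) else 0))) :=
            Finset.sum_congr rfl fun i _ => Finset.sum_congr rfl fun j _ => hsplit i j
        _ = (∑ i, ∑ j, A i j * ((if F (r + 1) ≤ g i then (1:ℝ) else 0)
              * (1 - if F (r + 1) ≤ g j then (1:ℝ) else 0)))
            + (∑ i, ∑ j, A i j * ((if F (r + 1) ≤ g j then (1:ℝ) else 0)
              * (1 - if F (r + 1) ≤ g i then (1:ℝ) else 0))) := by
            simp only [Finset.sum_add_distrib]
        _ = 2 * (∑ i ∈ S r, ∑ j ∈ (S r)ᶜ, A i j) := by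
            rw [← hEr r, h2]
            ring
    have hpoint : ∀ i j : Fin n, |g i - g j| = ∑ r ∈ Finset.range n,
        (F (r + 1) - F r) * |(if F (r + 1) ≤ g i then (1:ℝ) else 0)
          - (if F (r + 1) ≤ g j then (1:ℝ) else 0)| := by
      have H : ∀ a b : Fin n, g b ≤ g a → |g a - g b| = ∑ r ∈ Finset.range n,
          (F (r + 1) - F r) * |(if F (r + 1) ≤ g a then (1:ℝ) else 0)
            - (if F (r + 1) ≤ g b then (1:ℝ) else 0)| := by
        intro a b hba
        have hmi : ∀ r ∈ Finset.range n, (F (r + 1) - F r)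
              * |(if F (r + 1) ≤ g a then (1:ℝ) else 0)
                - (if F (r + 1) ≤ g b then (1:ℝ) else 0)|
            = (F (r + 1) - F r) * (if F (r + 1) ≤ g a then (1:ℝ) else 0)
              - (F (r + 1) - F r) * (if F (r + 1) ≤ g b then (1:ℝ) else 0) := by
          intro r _
          rw [← mul_sub]
          congr 1
          by_cases h1 : F (r + 1) ≤ g a <;> by_cases h2 : F (r + 1) ≤ g b
          · simp [h1, h2]
          · simp [h1, h2]
          · exact absurd (le_trans h2 hba) h1
          · simp [h1, h2]
        rw [Finset.sum_congr rfl hmi, Finset.sum_sub_distrib, hlayer a, hlayer b,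
          abs_of_nonneg (by linarith)]
      intro i j
      rcases le_total (g j) (g i) with h | h
      · exact H i j h
      · rw [abs_sub_comm, H j i h]
        exact Finset.sum_congr rfl fun r _ => by rw [abs_sub_comm]
    have hLHSsum : ∑ r ∈ Finset.range n,
        (F (r + 1) - F r) * (2 * (∑ i ∈ S r, ∑ j ∈ (S r)ᶜ, A i j)) = LHS := by
      calc ∑ r ∈ Finset.range n, (F (r + 1) - F r) * (2 * (∑ i ∈ S r, ∑ j ∈ (S r)ᶜ, A i j))
          = ∑ r ∈ Finset.range n, (F (r + 1) - F r) * (∑ i, ∑ j, A i j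
              * |(if F (r + 1) ≤ g i then (1 : ℝ) else 0)
                - (if F (r + 1) ≤ g j then (1 : ℝ) else 0)|) := by
            refine Finset.sum_congr rfl fun r _ => ?_
            rw [hD r]
        _ = ∑ r ∈ Finset.range n, ∑ i, ∑ j, (F (r + 1) - F r) * (A i j
              * |(if F (r + 1) ≤ g i then (1 : ℝ) else 0)
                - (if F (r + 1) ≤ g j then (1 : ℝ) else 0)|) := by
            refine Finset.sum_congr rfl fun r _ => ?_
            rw [Finset.mul_sum]
            exact Finset.sum_congr rfl fun i _ => Finset.mul_sum _ _ _
        _ = ∑ i, ∑ r ∈ Finset.range n, ∑ j, (F (r + 1) - F r) * (A i j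
              * |(if F (r + 1) ≤ g i then (1 : ℝ) else 0)
                - (if F (r + 1) ≤ g j then (1 : ℝ) else 0)|) := Finset.sum_comm
        _ = ∑ i, ∑ j, ∑ r ∈ Finset.range n, (F (r + 1) - F r) * (A i j
              * |(if F (r + 1) ≤ g i then (1 : ℝ) else 0)
                - (if F (r + 1) ≤ g j then (1 : ℝ) else 0)|) :=
            Finset.sum_congr rfl fun i _ => Finset.sum_comm
        _ = ∑ i, ∑ j, A i j * |g i - g j| := by
            refine Finset.sum_congr rfl fun i _ => Finset.sum_congr rfl fun j _ => ?_
            rw [hpoint i j, Finset.mul_sum]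
            exact Finset.sum_congr rfl fun r _ => by ring
        _ = LHS := hLHSdef.symm
    have hsumcard : ∑ r ∈ Finset.range n, (F (r + 1) - F r) * ((S r).card : ℝ) = X := by
      have hcard_eq : ∀ r : ℕ, ((S r).card : ℝ)
          = ∑ i, (if F (r + 1) ≤ g i then (1:ℝ) else 0) := by
        intro r
        rw [Finset.sum_boole, hSdef]
      calc ∑ r ∈ Finset.range n, (F (r + 1) - F r) * ((S r).card : ℝ)
          = ∑ r ∈ Finset.range n, ∑ i, (F (r + 1) - F r)
              * (if F (r + 1) ≤ g i then (1:ℝ) else 0) := by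
            refine Finset.sum_congr rfl fun r _ => ?_
            rw [hcard_eq r, Finset.mul_sum]
        _ = ∑ i, ∑ r ∈ Finset.range n, (F (r + 1) - F r)
              * (if F (r + 1) ≤ g i then (1:ℝ) else 0) := Finset.sum_comm
        _ = ∑ i, g i := Finset.sum_congr rfl fun i _ => hlayer i
        _ = X := hXg
    have key1 : ∀ r ∈ Finset.range n, 0 < F (r + 1) - F r →
        2 * c * ((d : ℝ) * ((S r).card : ℝ)) < 2 * (∑ i ∈ S r, ∑ j ∈ (S r)ᶜ, A i j) := by
      intro r hr hw
      rw [Finset.mem_range] at hr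
      have hFr1pos : 0 < F (r + 1) := by
        have := hFnn r (by omega)
        linarith
      have he : F (r + 1) = g (σ ⟨r, hr⟩) := hFs ⟨r, hr⟩
      have hne : (S r).Nonempty := ⟨σ ⟨r, hr⟩, (hSmem r _).mpr (le_of_eq he)⟩
      have hsup : ∀ i ∈ S r, x i ≠ 0 := by
        intro i hi h0
        rw [hSmem] at hi
        simp only [hgdef, h0] at hi
        norm_num at hi
        linarith
      have hcard := hsuppcard (S r) hsup
      have hcardpos : (0:ℝ) < ((S r).card : ℝ) := by
        exact_mod_cast Finset.card_pos.mpr hne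
      have hlt := hcon (S r) hne hcard
      have hd' : (0:ℝ) < (d : ℝ) := by exact_mod_cast hd
      have hdpos : (0:ℝ) < (d : ℝ) * ((S r).card : ℝ) := mul_pos hd' hcardpos
      rw [lt_div_iff₀ hdpos] at hlt
      nlinarith [hlt]
    have key2 : ∀ r ∈ Finset.range n,
        (F (r + 1) - F r) * (2 * c * ((d : ℝ) * ((S r).card : ℝ)))
          ≤ (F (r + 1) - F r) * (2 * (∑ i ∈ S r, ∑ j ∈ (S r)ᶜ, A i j)) := by
      intro r hr
      rcases eq_or_lt_of_le (hFmono r (Finset.mem_range.mp hr)) with heq | hlt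
      · have h0 : F (r + 1) - F r = 0 := by rw [← heq]; ring
        rw [h0]
        simp
      · have hwpos : 0 < F (r + 1) - F r := by linarith
        exact le_of_lt ((mul_lt_mul_iff_right₀ hwpos).mpr (key1 r hr hwpos))
    have hex : ∃ r ∈ Finset.range n,
        (F (r + 1) - F r) * (2 * c * ((d : ℝ) * ((S r).card : ℝ)))
          < (F (r + 1) - F r) * (2 * (∑ i ∈ S r, ∑ j ∈ (S r)ᶜ, A i j)) := by
      have hsumw : 0 < ∑ r ∈ Finset.range n, (F (r + 1) - F r) := by
        rw [Finset.sum_range_sub F n, hF0, sub_zero, hFk n (by omega) (by omega)]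
        have h1 : g i₀ ≤ g (σ ⟨n - 1, by omega⟩) := by
          have h2 := hmono (show σ⁻¹ i₀ ≤ (⟨n - 1, by omega⟩ : Fin n) by
            rw [Fin.le_def]; simp; omega)
          simpa using h2
        have h3 : 0 < g i₀ := by
          have h4 : g i₀ ≠ 0 := pow_ne_zero 2 hi₀
          exact lt_of_le_of_ne (hgnn i₀) (Ne.symm h4)
        linarith
      have hexw : ∃ r ∈ Finset.range n, 0 < F (r + 1) - F r := by
        by_contra hall
        push_neg at hall
        have : ∑ r ∈ Finset.range n, (F (r + 1) - F r) ≤ 0 :=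
          Finset.sum_nonpos fun r hr => hall r hr
        linarith
      obtain ⟨r, hr, hwr⟩ := hexw
      exact ⟨r, hr, (mul_lt_mul_iff_right₀ hwr).mpr (key1 r hr hwr)⟩
    have hsum_lt : ∑ r ∈ Finset.range n, (F (r + 1) - F r) * (2 * c * ((d : ℝ) * ((S r).card : ℝ)))
        < ∑ r ∈ Finset.range n, (F (r + 1) - F r) * (2 * (∑ i ∈ S r, ∑ j ∈ (S r)ᶜ, A i j)) :=
      Finset.sum_lt_sum key2 hex
    have e : ∑ r ∈ Finset.range n, (F (r + 1) - F r) * (2 * c * ((d : ℝ) * ((S r).card : ℝ)))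
        = 2 * c * ((d : ℝ) * X) := by
      have h1 : ∀ r ∈ Finset.range n,
          (F (r + 1) - F r) * (2 * c * ((d : ℝ) * ((S r).card : ℝ)))
            = (2 * c * (d : ℝ)) * ((F (r + 1) - F r) * ((S r).card : ℝ)) := fun r _ => by ring
      rw [Finset.sum_congr rfl h1, ← Finset.mul_sum, hsumcard]
      ring
    rw [e, hLHSsum] at hsum_lt
    have : 2 * c * ((d : ℝ) * X) = 2 * ((d : ℝ) * X) * c := by ring
    linarith
end

section
/- Let M satisfy M^T M = L, the normalized Laplacian of a d-regular graph G. If M is not (k, δ)-RIP due to a violation of the lower bound, i.e., there is a k-sparse x with ||Mx||_2 < (1−δ)||x||_2, then there exists a nonempty set S with |S| ≤ k and φ_G(S) ≤ sqrt(1 − (2δ − δ^2)^2). -/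
open Finset Matrix

set_option maxHeartbeats 1000000 in
/-- If M^T M = L and there is a k-sparse x with ‖Mx‖ < (1−δ)‖x‖, then there is
a nonempty set S with |S| ≤ k and φ_G(S) ≤ sqrt(1 − (2δ − δ²)²). -/
theorem rip_violation_gives_small_expander (n d m : ℕ) (hd : 0 < d)
    (A : Matrix (Fin n) (Fin n) ℝ) (hsymm : A.IsSymm)
    (h01 : ∀ i j, A i j = 0 ∨ A i j = 1) (hdiag : ∀ i, A i i = 0)
    (hreg : ∀ i, ∑ j, A i j = d)
    (M : Matrix (Fin m) (Fin n) ℝ) (hM : Mᵀ * M = 1 - (d : ℝ)⁻¹ • A)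
    (k : ℕ) (δ : ℝ) (hδ0 : 0 < δ) (hδ1 : δ < 1)
    (x : Fin n → ℝ) (hx : x ≠ 0) (hsparse : (Function.support x).ncard ≤ k)
    (hviol : Real.sqrt (M.mulVec x ⬝ᵥ M.mulVec x)
              < (1 - δ) * Real.sqrt (x ⬝ᵥ x)) :
    ∃ S : Finset (Fin n), S.Nonempty ∧ S.card ≤ k ∧
      (∑ i ∈ S, ∑ j ∈ Sᶜ, A i j) / (d * S.card)
        ≤ Real.sqrt (1 - (2 * δ - δ ^ 2) ^ 2) := by
  classical
  obtain ⟨i0, hi0⟩ : ∃ i, x i ≠ 0 := Function.ne_iff.mp hx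
  have hn : 0 < n := i0.pos
  set y : Fin n → ℝ := fun i => |x i| with hy
  have hysq : ∀ i, y i ^ 2 = x i ^ 2 := fun i => sq_abs (x i)
  set N : ℝ := ∑ i, x i ^ 2 with hNdef
  clear_value N
  have hN : 0 < N := by
    rw [hNdef]
    apply Finset.sum_pos' (fun i _ => sq_nonneg (x i))
    exact ⟨i0, mem_univ i0, by positivity⟩
  have hA0 : ∀ i j, 0 ≤ A i j := by
    intro i j; rcases h01 i j with h | h <;> simp [h]
  have hAsym : ∀ i j, A i j = A j i := by
    intro i j
    have := congrFun (congrFun hsymm j) i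
    simpa [Matrix.transpose_apply] using this
  have hcol : ∀ j, ∑ i, A i j = d := by
    intro j; rw [show (∑ i, A i j) = ∑ i, A j i from by simp [hAsym]]; exact hreg j
  set P : ℝ := ∑ i, ∑ j, A i j * (y i * y j) with hPdef
  set PX : ℝ := ∑ i, ∑ j, A i j * (x i * x j) with hPXdef
  clear_value P PX
  -- Step A: Rayleigh quotient
  have hRQ : M.mulVec x ⬝ᵥ M.mulVec x = N - (d : ℝ)⁻¹ * PX := by
    have h1 : M.mulVec x ⬝ᵥ M.mulVec x = x ⬝ᵥ (Mᵀ * M).mulVec x := by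
      conv_rhs => rw [← Matrix.mulVec_mulVec, Matrix.dotProduct_mulVec,
        Matrix.vecMul_transpose]
    rw [h1, hM, Matrix.sub_mulVec, dotProduct_sub, Matrix.one_mulVec]
    congr 1
    · rw [hNdef]; simp [dotProduct, sq]
    · rw [Matrix.smul_mulVec, dotProduct_smul]
      simp only [smul_eq_mul]
      congr 1
      rw [hPXdef]
      simp only [dotProduct, Matrix.mulVec, Finset.mul_sum]
      apply Finset.sum_congr rfl; intro i _
      apply Finset.sum_congr rfl; intro j _
      ring
  -- Step B: violation gives quotient bound
  have hPXP : PX ≤ P := by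
    rw [hPXdef, hPdef]
    apply Finset.sum_le_sum; intro i _
    apply Finset.sum_le_sum; intro j _
    apply mul_le_mul_of_nonneg_left _ (hA0 i j)
    calc x i * x j ≤ |x i * x j| := le_abs_self _
      _ = y i * y j := abs_mul _ _
  have hQlt : N - (d : ℝ)⁻¹ * P < (1 - δ)^2 * N := by
    have hMx0 : 0 ≤ M.mulVec x ⬝ᵥ M.mulVec x := by
      apply Finset.sum_nonneg; intro i _; exact mul_self_nonneg _
    have hxx : x ⬝ᵥ x = N := by rw [hNdef]; simp [dotProduct, sq]
    have hsN : 0 < Real.sqrt N := Real.sqrt_pos.mpr hN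
    have hrhs : 0 < (1 - δ) * Real.sqrt N := mul_pos (by linarith) hsN
    rw [hxx] at hviol
    have h2 : M.mulVec x ⬝ᵥ M.mulVec x < ((1 - δ) * Real.sqrt N) ^ 2 :=
      (Real.sqrt_lt' hrhs).mp hviol
    rw [mul_pow, Real.sq_sqrt hN.le] at h2
    rw [hRQ] at h2
    have h3 : (d:ℝ)⁻¹ * PX ≤ (d:ℝ)⁻¹ * P :=
      mul_le_mul_of_nonneg_left hPXP (by positivity)
    linarith
  -- row/col square sums
  have hrow2 : ∑ i, ∑ j, A i j * (y i ^ 2) = d * N := by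
    have : ∀ i : Fin n, ∑ j, A i j * (y i ^ 2) = d * (y i ^ 2) := by
      intro i; rw [← Finset.sum_mul, hreg i]
    simp only [this]
    rw [← Finset.mul_sum]
    congr 1
    simp [hysq, hNdef]
  have hcol2 : ∑ i, ∑ j, A i j * (y j ^ 2) = d * N := by
    rw [Finset.sum_comm]
    have : ∀ j : Fin n, ∑ i, A i j * (y j ^ 2) = d * (y j ^ 2) := by
      intro j; rw [← Finset.sum_mul, hcol j]
    simp only [this]
    rw [← Finset.mul_sum]
    congr 1
    simp [hysq, hNdef]
  have hPdN : P ≤ d * N := by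
    have step : 2 * P ≤ ∑ i, ∑ j, (A i j * (y i ^ 2) + A i j * (y j ^ 2)) := by
      rw [hPdef, Finset.mul_sum]
      apply Finset.sum_le_sum; intro i _
      rw [Finset.mul_sum]
      apply Finset.sum_le_sum; intro j _
      nlinarith [sq_nonneg (y i - y j), hA0 i j]
    have expand : ∑ i, ∑ j, (A i j * (y i ^ 2) + A i j * (y j ^ 2))
        = (∑ i, ∑ j, A i j * (y i ^ 2)) + (∑ i, ∑ j, A i j * (y j ^ 2)) := by
      rw [← Finset.sum_add_distrib]
      apply Finset.sum_congr rfl; intro i _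
      rw [← Finset.sum_add_distrib]
    rw [expand, hrow2, hcol2] at step
    linarith
  set Q : ℝ := N - (d : ℝ)⁻¹ * P with hQdef
  clear_value Q
  have hQ0 : 0 ≤ Q := by
    have : (d:ℝ)⁻¹ * P ≤ (d:ℝ)⁻¹ * (d * N) := by
      apply mul_le_mul_of_nonneg_left hPdN (by positivity)
    have hd' : (0:ℝ) < d := by exact_mod_cast hd
    rw [hQdef]; rw [inv_mul_cancel_left₀ (ne_of_gt hd')] at this; linarith
  set u : ℝ := 2 * δ - δ ^ 2 with hudef
  clear_value u
  have hu0 : 0 < u := by rw [hudef]; nlinarith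
  have hu1 : u < 1 := by rw [hudef]; nlinarith
  set c : ℝ := Real.sqrt (1 - u ^ 2) with hcdef
  clear_value c
  have hc0 : 0 ≤ c := hcdef ▸ Real.sqrt_nonneg _
  have hc2 : c ^ 2 = 1 - u ^ 2 := by rw [hcdef]; exact Real.sq_sqrt (by nlinarith)
  -- Step E: Cauchy-Schwarz
  set C : ℝ := ∑ i, ∑ j, A i j * |y i ^ 2 - y j ^ 2| with hCdef
  clear_value C
  have hC0 : 0 ≤ C := by
    rw [hCdef]
    apply Finset.sum_nonneg; intro i _; apply Finset.sum_nonneg; intro j _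
    exact mul_nonneg (hA0 i j) (abs_nonneg _)
  have hCsq : C ^ 2 ≤ (2*d*N - 2*P) * (2*d*N + 2*P) := by
    have hAA : ∀ i j, A i j * A i j = A i j := by
      intro i j; rcases h01 i j with h | h <;> simp [h]
    have key := Finset.sum_mul_sq_le_sq_mul_sq (univ ×ˢ univ)
      (fun p : Fin n × Fin n => A p.1 p.2 * |y p.1 - y p.2|)
      (fun p : Fin n × Fin n => A p.1 p.2 * |y p.1 + y p.2|)
    have efg : ∑ p ∈ univ ×ˢ univ,
        (A p.1 p.2 * |y p.1 - y p.2|) * (A p.1 p.2 * |y p.1 + y p.2|) = C := by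
      rw [Finset.sum_product, hCdef]
      apply Finset.sum_congr rfl; intro i _
      apply Finset.sum_congr rfl; intro j _
      have : |y i - y j| * |y i + y j| = |y i ^ 2 - y j ^ 2| := by
        rw [← abs_mul]; ring_nf
      calc (A i j * |y i - y j|) * (A i j * |y i + y j|)
          = (A i j * A i j) * (|y i - y j| * |y i + y j|) := by ring
        _ = A i j * |y i ^ 2 - y j ^ 2| := by rw [hAA, this]
    have ef2 : ∑ p ∈ univ ×ˢ univ, (A p.1 p.2 * |y p.1 - y p.2|) ^ 2
        = 2*d*N - 2*P := by
      rw [Finset.sum_product]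
      have e1 : ∀ i j : Fin n, (A i j * |y i - y j|) ^ 2
          = A i j * (y i ^ 2) + A i j * (y j ^ 2) - 2 * (A i j * (y i * y j)) := by
        intro i j
        have h1 : (A i j * |y i - y j|) ^ 2 = (A i j * A i j) * (y i - y j) ^ 2 := by
          rw [mul_pow, sq_abs]; ring
        rw [h1, hAA]; ring
      simp only [e1]
      have : ∑ i, ∑ j, (A i j * (y i ^ 2) + A i j * (y j ^ 2) - 2 * (A i j * (y i * y j)))
          = (∑ i, ∑ j, A i j * (y i ^ 2)) + (∑ i, ∑ j, A i j * (y j ^ 2))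
            - 2 * (∑ i, ∑ j, A i j * (y i * y j)) := by
        rw [Finset.mul_sum, ← Finset.sum_add_distrib, ← Finset.sum_sub_distrib]
        apply Finset.sum_congr rfl; intro i _
        rw [Finset.mul_sum, ← Finset.sum_add_distrib, ← Finset.sum_sub_distrib]
      rw [this, hrow2, hcol2, ← hPdef]; ring
    have eg2 : ∑ p ∈ univ ×ˢ univ, (A p.1 p.2 * |y p.1 + y p.2|) ^ 2
        = 2*d*N + 2*P := by
      rw [Finset.sum_product]
      have e1 : ∀ i j : Fin n, (A i j * |y i + y j|) ^ 2
          = A i j * (y i ^ 2) + A i j * (y j ^ 2) + 2 * (A i j * (y i * y j)) := by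
        intro i j
        have h1 : (A i j * |y i + y j|) ^ 2 = (A i j * A i j) * (y i + y j) ^ 2 := by
          rw [mul_pow, sq_abs]; ring
        rw [h1, hAA]; ring
      simp only [e1]
      have : ∑ i, ∑ j, (A i j * (y i ^ 2) + A i j * (y j ^ 2) + 2 * (A i j * (y i * y j)))
          = (∑ i, ∑ j, A i j * (y i ^ 2)) + (∑ i, ∑ j, A i j * (y j ^ 2))
            + 2 * (∑ i, ∑ j, A i j * (y i * y j)) := by
        rw [Finset.mul_sum, ← Finset.sum_add_distrib, ← Finset.sum_add_distrib]
        apply Finset.sum_congr rfl; intro i _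
        rw [Finset.mul_sum, ← Finset.sum_add_distrib, ← Finset.sum_add_distrib]
      rw [this, hrow2, hcol2, ← hPdef]; ring
    rw [efg, ef2, eg2] at key
    exact key
  have hClt : C < 2 * d * c * N := by
    have hd' : (0:ℝ) < d := by exact_mod_cast hd
    have hNQ : u * N < N - Q := by
      have h1u : (1 - δ)^2 = 1 - u := by rw [hudef]; ring
      rw [h1u] at hQlt
      rw [hQdef]; linarith
    have hdP : (d:ℝ) * (N - Q) = P := by
      rw [hQdef]; field_simp; ring
    have h2 : (u * N) ^ 2 < (N - Q) ^ 2 := by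
      have huN : 0 ≤ u * N := by positivity
      exact pow_lt_pow_left₀ hNQ huN two_ne_zero
    have e : (2*d*N - 2*P) * (2*d*N + 2*P) = 4*(d:ℝ)^2*(N^2 - (N-Q)^2) := by
      rw [← hdP]; ring
    have lt1 : 4*(d:ℝ)^2*(N^2 - (N-Q)^2) < 4*(d:ℝ)^2*(N^2 - (u*N)^2) := by
      have h4 : (0:ℝ) < 4*(d:ℝ)^2 := by positivity
      have : N^2 - (N-Q)^2 < N^2 - (u*N)^2 := by linarith
      exact mul_lt_mul_of_pos_left this h4
    have e2 : 4*(d:ℝ)^2*(N^2 - (u*N)^2) = (2*d*c*N)^2 := by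
      have h5 : (2*d*c*N)^2 = 4*(d:ℝ)^2*(c^2)*N^2 := by ring
      rw [h5, hc2]; ring
    have h3 : C ^ 2 < (2 * d * c * N) ^ 2 := by
      rw [e] at hCsq; rw [← e2]; linarith
    have hb : 0 ≤ 2 * d * c * N := by positivity
    exact lt_of_pow_lt_pow_left₀ 2 hb h3
  -- Step G: sweep cut
  have hd' : (0:ℝ) < d := by exact_mod_cast hd
  set σ : Equiv.Perm (Fin n) := Tuple.sort (fun i => y i ^ 2) with hσdef
  have hσmono : Monotone ((fun i => y i ^ 2) ∘ σ) := hσdef ▸ Tuple.monotone_sort _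
  have hn1 : ∀ j : ℕ, min j (n-1) < n := fun j => by omega
  set g : ℕ → ℝ := fun j => y (σ ⟨min j (n-1), hn1 j⟩) ^ 2 with hgdef
  have hgmono : Monotone g := by
    intro a b hab
    rw [hgdef]
    exact hσmono (show (⟨min a (n-1), hn1 a⟩ : Fin n) ≤ ⟨min b (n-1), hn1 b⟩ from by
      simp only [Fin.mk_le_mk]; omega)
  have hg0 : ∀ j, 0 ≤ g j := fun j => by rw [hgdef]; positivity
  have hgval : ∀ i : Fin n, g ((σ⁻¹ i : Fin n) : ℕ) = y i ^ 2 := by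
    intro i
    have h1 : (⟨min ((σ⁻¹ i : Fin n) : ℕ) (n-1), hn1 _⟩ : Fin n) = σ⁻¹ i := by
      apply Fin.ext
      have := (σ⁻¹ i).isLt
      simp only []
      omega
    rw [hgdef]
    simp only [h1]; rw [Equiv.Perm.inv_def, Equiv.apply_symm_apply]
  clear_value g
  set f : ℕ → ℝ := fun j => if j = 0 then 0 else g (j-1) with hfdef
  have hf0 : f 0 = 0 := by rw [hfdef]; simp
  have hfs : ∀ j : ℕ, f (j+1) = g j := fun j => by rw [hfdef]; simp
  have hfmono : Monotone f := by
    apply monotone_nat_of_le_succ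
    intro j
    cases j with
    | zero => rw [hf0, hfs]; exact hg0 0
    | succ j' => rw [hfs, hfs]; exact hgmono (Nat.le_succ j')
  clear_value f
  have hfnn : ∀ j, 0 ≤ f j := fun j => hf0 ▸ hfmono (Nat.zero_le j)
  -- telescoping lemma
  have tele : ∀ c0 : ℝ, (∃ i : Fin n, c0 = y i ^ 2) →
      ∑ j ∈ range n, (if f (j+1) ≤ c0 then f (j+1) - f j else 0) = c0 := by
    rintro c0 ⟨i, rfl⟩
    have term : ∀ j ∈ range n, (if f (j+1) ≤ y i ^ 2 then f (j+1) - f j else 0)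
        = min (f (j+1)) (y i ^ 2) - min (f j) (y i ^ 2) := by
      intro j hj
      rw [mem_range] at hj
      by_cases h : f (j+1) ≤ y i ^ 2
      · rw [if_pos h, min_eq_left h, min_eq_left ((hfmono (Nat.le_succ j)).trans h)]
      · rw [if_neg h]
        push_neg at h
        have hjs : ((σ⁻¹ i : Fin n) : ℕ) < j := by
          by_contra hc
          push_neg at hc
          have h2 : g j ≤ g ((σ⁻¹ i : Fin n) : ℕ) := hgmono hc
          rw [hgval] at h2
          rw [hfs] at h
          linarith
        have hfj : y i ^ 2 ≤ f j := by
          have hj1 : j ≠ 0 := by omega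
          have hfj' : f j = g (j-1) := by rw [hfdef]; simp [hj1]
          rw [hfj', ← hgval i]
          exact hgmono (by omega)
        rw [min_eq_right h.le, min_eq_right hfj]
        ring
    rw [Finset.sum_congr rfl term,
      Finset.sum_range_sub (fun t => min (f t) (y i ^ 2)) n, hf0]
    have hfn : y i ^ 2 ≤ f n := by
      have hfn' : f n = g (n-1) := by rw [hfdef]; simp [Nat.pos_iff_ne_zero.mp hn]
      rw [hfn', ← hgval i]
      exact hgmono (by have := (σ⁻¹ i).isLt; omega)
    rw [min_eq_right hfn, min_eq_left (by positivity)]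
    ring
  set S : ℕ → Finset (Fin n) :=
    fun j => univ.filter (fun i => f (j+1) ≤ y i ^ 2) with hSdef
  clear_value S
  have hScard : ∀ j : ℕ, ((S j).card : ℝ)
      = ∑ i : Fin n, (if f (j+1) ≤ y i ^ 2 then (1:ℝ) else 0) := by
    intro j
    simp only [hSdef]
    rw [Finset.sum_boole]
  -- identity 1
  have id1 : ∑ j ∈ range n, (f (j+1) - f j) * ((S j).card : ℝ) = N := by
    calc ∑ j ∈ range n, (f (j+1) - f j) * ((S j).card : ℝ)
        = ∑ j ∈ range n, ∑ i : Fin n,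
            (if f (j+1) ≤ y i ^ 2 then f (j+1) - f j else 0) := by
          apply Finset.sum_congr rfl; intro j _
          rw [hScard, Finset.mul_sum]
          apply Finset.sum_congr rfl; intro i _
          rw [mul_ite, mul_one, mul_zero]
      _ = ∑ i : Fin n, ∑ j ∈ range n,
            (if f (j+1) ≤ y i ^ 2 then f (j+1) - f j else 0) := Finset.sum_comm
      _ = ∑ i : Fin n, y i ^ 2 := by
          apply Finset.sum_congr rfl; intro i _
          exact tele _ ⟨i, rfl⟩
      _ = N := by rw [hNdef]; exact Finset.sum_congr rfl (fun i _ => hysq i)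
  -- cut rewriting
  have hcut : ∀ j : ℕ, (∑ i ∈ S j, ∑ i' ∈ (S j)ᶜ, A i i')
      = ∑ i : Fin n, ∑ i' : Fin n,
          (if f (j+1) ≤ y i ^ 2 then (1:ℝ) else 0)
          * ((1 - if f (j+1) ≤ y i' ^ 2 then (1:ℝ) else 0) * A i i') := by
    intro j
    simp only [hSdef]
    rw [Finset.sum_filter]
    apply Finset.sum_congr rfl; intro i _
    by_cases h1 : f (j+1) ≤ y i ^ 2
    · rw [if_pos h1]
      have : (univ.filter (fun i => f (j+1) ≤ y i ^ 2) : Finset (Fin n))ᶜ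
          = univ.filter (fun i => ¬ f (j+1) ≤ y i ^ 2) := by
        ext a; simp only [Finset.mem_compl, Finset.mem_filter, Finset.mem_univ,
          true_and]
      rw [this, Finset.sum_filter]
      apply Finset.sum_congr rfl; intro i' _
      by_cases h2 : f (j+1) ≤ y i' ^ 2 <;> simp [h1, h2]
    · rw [if_neg h1]
      symm
      apply Finset.sum_eq_zero
      intro i' _
      rw [if_neg h1, zero_mul]
  -- identity 2
  have hmin_att : ∀ i i' : Fin n, ∃ i'' : Fin n,
      min (y i ^ 2) (y i' ^ 2) = y i'' ^ 2 := by
    intro i i'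
    rcases le_total (y i ^ 2) (y i' ^ 2) with h | h
    · exact ⟨i, min_eq_left h⟩
    · exact ⟨i', min_eq_right h⟩
  have id2 : ∑ j ∈ range n, (f (j+1) - f j) * (∑ i ∈ S j, ∑ i' ∈ (S j)ᶜ, A i i')
      = ∑ i : Fin n, ∑ i' : Fin n,
          A i i' * (y i ^ 2 - min (y i ^ 2) (y i' ^ 2)) := by
    calc ∑ j ∈ range n, (f (j+1) - f j) * (∑ i ∈ S j, ∑ i' ∈ (S j)ᶜ, A i i')
        = ∑ j ∈ range n, ∑ i : Fin n, ∑ i' : Fin n, (f (j+1) - f j) *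
            ((if f (j+1) ≤ y i ^ 2 then (1:ℝ) else 0)
             * ((1 - if f (j+1) ≤ y i' ^ 2 then (1:ℝ) else 0) * A i i')) := by
          apply Finset.sum_congr rfl; intro j _
          rw [hcut j, Finset.mul_sum]
          apply Finset.sum_congr rfl; intro i _
          rw [Finset.mul_sum]
      _ = ∑ i : Fin n, ∑ i' : Fin n, ∑ j ∈ range n, (f (j+1) - f j) *
            ((if f (j+1) ≤ y i ^ 2 then (1:ℝ) else 0)
             * ((1 - if f (j+1) ≤ y i' ^ 2 then (1:ℝ) else 0) * A i i')) := by
          rw [Finset.sum_comm]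
          apply Finset.sum_congr rfl; intro i _
          rw [Finset.sum_comm]
      _ = ∑ i : Fin n, ∑ i' : Fin n,
            A i i' * (y i ^ 2 - min (y i ^ 2) (y i' ^ 2)) := by
          apply Finset.sum_congr rfl; intro i _
          apply Finset.sum_congr rfl; intro i' _
          have e : ∀ j ∈ range n, (f (j+1) - f j) *
              ((if f (j+1) ≤ y i ^ 2 then (1:ℝ) else 0)
               * ((1 - if f (j+1) ≤ y i' ^ 2 then (1:ℝ) else 0) * A i i'))
              = A i i' * ((if f (j+1) ≤ y i ^ 2 then f (j+1) - f j else 0)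
                - (if f (j+1) ≤ min (y i ^ 2) (y i' ^ 2) then f (j+1) - f j else 0)) := by
            intro j _
            by_cases h1 : f (j+1) ≤ y i ^ 2
            · by_cases h2 : f (j+1) ≤ y i' ^ 2
              · rw [if_pos h1, if_pos h2, if_pos h1,
                  if_pos (le_min_iff.mpr ⟨h1, h2⟩)]
                ring
              · rw [if_pos h1, if_neg h2, if_pos h1,
                  if_neg (fun hc => h2 (le_trans hc (min_le_right _ _)))]
                ring
            · by_cases h2 : f (j+1) ≤ y i' ^ 2
              · rw [if_neg h1, if_pos h2, if_neg h1,
                  if_neg (fun hc => h1 (le_trans hc (min_le_left _ _)))]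
                ring
              · rw [if_neg h1, if_neg h2, if_neg h1,
                  if_neg (fun hc => h1 (le_trans hc (min_le_left _ _)))]
                ring
          rw [Finset.sum_congr rfl e, ← Finset.mul_sum, Finset.sum_sub_distrib,
            tele _ ⟨i, rfl⟩, tele _ (hmin_att i i')]
  -- symmetrization: the double sum is C/2
  set X : ℝ := ∑ i : Fin n, ∑ i' : Fin n,
      A i i' * (y i ^ 2 - min (y i ^ 2) (y i' ^ 2)) with hXdef
  have hswap : X = ∑ i : Fin n, ∑ i' : Fin n,
      A i i' * (y i' ^ 2 - min (y i' ^ 2) (y i ^ 2)) := by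
    rw [hXdef, Finset.sum_comm]
    apply Finset.sum_congr rfl; intro i _
    apply Finset.sum_congr rfl; intro i' _
    rw [hAsym]
  have h2X : 2 * X = C := by
    calc 2 * X = X + X := by ring
      _ = ∑ i : Fin n, ∑ i' : Fin n,
            (A i i' * (y i ^ 2 - min (y i ^ 2) (y i' ^ 2))
             + A i i' * (y i' ^ 2 - min (y i' ^ 2) (y i ^ 2))) := by
          nth_rewrite 2 [hswap]
          rw [hXdef]
          rw [← Finset.sum_add_distrib]
          apply Finset.sum_congr rfl; intro i _
          rw [← Finset.sum_add_distrib]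
      _ = C := by
          rw [hCdef]
          apply Finset.sum_congr rfl; intro i _
          apply Finset.sum_congr rfl; intro i' _
          rcases le_total (y i ^ 2) (y i' ^ 2) with h | h
          · rw [min_eq_left h, min_eq_right h, abs_sub_comm, abs_of_nonneg (by linarith)]
            ring
          · rw [min_eq_right h, min_eq_left h, abs_of_nonneg (by linarith)]
            ring
  clear_value X
  have hXlt : X < c * (d * N) := by linarith [hClt, h2X]
  -- extraction
  have hsum_lt : ∑ j ∈ range n, (f (j+1) - f j) * (∑ i ∈ S j, ∑ i' ∈ (S j)ᶜ, A i i')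
      < ∑ j ∈ range n, (f (j+1) - f j) * (c * ((d:ℝ) * ((S j).card : ℝ))) := by
    rw [id2]
    have hr : ∑ j ∈ range n, (f (j+1) - f j) * (c * ((d:ℝ) * ((S j).card : ℝ)))
        = c * ((d:ℝ) * N) := by
      rw [← id1, Finset.mul_sum]
      rw [Finset.mul_sum]
      apply Finset.sum_congr rfl; intro j _
      ring
    rw [hr]
    exact hXlt
  obtain ⟨j, hjmem, hjlt⟩ := Finset.exists_lt_of_sum_lt hsum_lt
  have hw0 : 0 ≤ f (j+1) - f j := sub_nonneg.mpr (hfmono (Nat.le_succ j))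
  have hwpos : 0 < f (j+1) - f j := by
    rcases eq_or_lt_of_le hw0 with h | h
    · rw [← h] at hjlt; simp at hjlt
    · exact h
  have hmain : (∑ i ∈ S j, ∑ i' ∈ (S j)ᶜ, A i i') < c * ((d:ℝ) * ((S j).card : ℝ)) :=
    (mul_lt_mul_iff_right₀ hwpos).mp hjlt
  have hjn : j < n := mem_range.mp hjmem
  have hfin : (⟨j ⊓ (n-1), hn1 j⟩ : Fin n) = ⟨j, hjn⟩ := by
    apply Fin.ext
    simp only []
    omega
  have hfj1 : f (j+1) = y (σ ⟨j, hjn⟩) ^ 2 := by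
    rw [hfs j]
    simp only [hgdef, hfin]
  have hmem : σ ⟨j, hjn⟩ ∈ S j := by
    simp only [hSdef]
    rw [Finset.mem_filter]
    exact ⟨Finset.mem_univ _, le_of_eq hfj1⟩
  refine ⟨S j, ?_, ?_, ?_⟩
  · exact ⟨σ ⟨j, hjn⟩, hmem⟩
  · have hfpos : 0 < f (j+1) := lt_of_le_of_lt (hfnn j) (by linarith)
    have hsub : S j ⊆ univ.filter (fun i => x i ≠ 0) := by
      intro i hi
      simp only [hSdef] at hi
      rw [Finset.mem_filter] at hi
      rw [Finset.mem_filter]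
      refine ⟨Finset.mem_univ _, ?_⟩
      intro hxi
      have : y i ^ 2 = 0 := by rw [hy]; simp [hxi]
      rw [this] at hi
      linarith [hi.2]
    have hcard : (univ.filter (fun i => x i ≠ 0)).card = (Function.support x).ncard := by
      rw [← Set.ncard_coe_finset]
      congr 1
      ext i
      simp [Function.mem_support]
    exact le_trans (Finset.card_le_card hsub) (hcard ▸ hsparse)
  · have hSne : 0 < (S j).card := Finset.card_pos.mpr ⟨σ ⟨j, hjn⟩, hmem⟩
    have hpos : (0:ℝ) < (d:ℝ) * ((S j).card : ℝ) := by
      apply mul_pos hd'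
      exact_mod_cast hSne
    rw [div_le_iff₀ hpos]
    linarith [hmain]
end
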